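/- Let G be a multigraph on n ≥ 2 vertices with minimum cut value c ≥ 1, and suppose each edge fails independently with probability p ∈ [0,1], where p^c = n^{-(2+δ)} for some real δ > 0. Then for every integer r ≥ 2, the probability that some r-way cut of G fails (all edges of its edge set fail) is at most n^{-δr/4}(1 + 2/δ). -/

import Mathlib

open scoped Classical

/-- A multigraph on vertex type `V` is given by an edge-index type `E` together with a map
`ends : E → Sym2 V` assigning to each edge its (unordered) pair of endpoints; the hypothesis
`∀ e, ¬ (ends e).IsDiag` says that the two endpoints of every edge are distinct.
`survGraph ends F` is the simple graph on `V` whose adjacencies are given by the edges of the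
multigraph that survive when the edges in `F` fail. -/
def survGraph {V E : Type} (ends : E → Sym2 V) (F : Finset E) : SimpleGraph V :=
  SimpleGraph.fromRel (fun x y => ∃ e, e ∉ F ∧ ends e = s(x, y))

/-- The number of connected components of the graph surviving after the edges in `F` fail. -/
noncomputable def numComponents {V E : Type} (ends : E → Sym2 V) (F : Finset E) : ℕ :=
  Nat.card (survGraph ends F).ConnectedComponent

/-- Edge `e` crosses the 2-way cut determined by the vertex set `A` (one endpoint in `A`,
one endpoint outside `A`). -/
def crosses {V E : Type} (ends : E → Sym2 V) (A : Finset V) (e : E) : Prop :=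
  (∃ x ∈ ends e, x ∈ A) ∧ (∃ x ∈ ends e, x ∉ A)

/-- The edge set of the 2-way cut determined by the vertex set `A`. -/
noncomputable def cutEdges {V E : Type} [Fintype E] (ends : E → Sym2 V) (A : Finset V) :
    Finset E :=
  Finset.univ.filter (crosses ends A)

/-- The value of the 2-way cut determined by the vertex set `A`. -/
noncomputable def cutValue {V E : Type} [Fintype E] (ends : E → Sym2 V) (A : Finset V) : ℕ :=
  (cutEdges ends A).card

/-- When each edge fails independently with probability `p`, this is the probability that the
(random) set of failed edges is a member of `S`. -/
noncomputable def failurePr {E : Type} [Fintype E] (p : ℝ) (S : Finset (Finset E)) : ℝ :=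
  ∑ F ∈ S, p ^ F.card * (1 - p) ^ (Fintype.card E - F.card)

/-- `P` is a partition of the vertex set into `r` (pairwise disjoint) nonempty parts. -/
def IsPartitionInto {V : Type} (P : Finset (Finset V)) (r : ℕ) : Prop :=
  P.card = r ∧ (∀ A ∈ P, A.Nonempty) ∧
    (∀ A ∈ P, ∀ B ∈ P, A ≠ B → Disjoint A B) ∧ (∀ x : V, ∃ A ∈ P, x ∈ A)

/-- Edge `e` crosses the multiway cut determined by the partition `P`
(its endpoints lie in different parts). -/
def rCrosses {V E : Type} (ends : E → Sym2 V) (P : Finset (Finset V)) (e : E) : Prop :=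
  ¬ ∃ A ∈ P, ∀ x ∈ ends e, x ∈ A

/-- The edge set of the multiway cut determined by the partition `P`. -/
noncomputable def rCutEdges {V E : Type} [Fintype E] (ends : E → Sym2 V)
    (P : Finset (Finset V)) : Finset E :=
  Finset.univ.filter (rCrosses ends P)

/-- The value of the multiway cut determined by the partition `P`. -/
noncomputable def rCutValue {V E : Type} [Fintype E] (ends : E → Sym2 V)
    (P : Finset (Finset V)) : ℕ :=
  (rCutEdges ends P).card

set_option linter.unusedSectionVars false
set_option linter.unusedVariables false
set_option maxHeartbeats 2000000

namespace Stmt10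
variable {V E : Type} [Fintype V] [DecidableEq V] [Fintype E]
lemma part_unique {P : Finset (Finset V)} {k : ℕ} (hP : IsPartitionInto P k)
    {A B : Finset V} {x : V} (hA : A ∈ P) (hB : B ∈ P) (hxA : x ∈ A) (hxB : x ∈ B) : A = B := by
  by_contra hne
  exact (Finset.disjoint_left.1 (hP.2.2.1 A hA B hB hne) hxA) hxB
noncomputable def ep1 {V : Type} (z : Sym2 V) : V := (Quot.out z).1
noncomputable def ep2 {V : Type} (z : Sym2 V) : V := (Quot.out z).2
lemma ep_spec {V : Type} (z : Sym2 V) : s(ep1 z, ep2 z) = z := Quot.out_eq z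
lemma mem_ends_iff {V : Type} {z : Sym2 V} {x : V} : x ∈ z ↔ x = ep1 z ∨ x = ep2 z := by
  conv_lhs => rw [← ep_spec z]
  exact Sym2.mem_iff
end Stmt10

namespace Stmt10
variable {V E : Type} [Fintype V] [DecidableEq V] [Fintype E]

def Coarsens {V : Type} (π P : Finset (Finset V)) : Prop := ∀ A ∈ π, ∃ B ∈ P, A ⊆ B

noncomputable def cnt (ends : E → Sym2 V) (r s : ℕ) (π : Finset (Finset V)) : ℕ :=
  ((Finset.univ : Finset (Finset (Finset V))).filter
    (fun P => IsPartitionInto P r ∧ rCutValue ends P ≤ s ∧ Coarsens π P)).card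

/-- the part of the partition containing `x` -/
noncomputable def partOf (π : Finset (Finset V)) (x : V) : Finset V :=
  if h : ∃ A ∈ π, x ∈ A then h.choose else ∅

lemma partOf_mem {π : Finset (Finset V)} {k : ℕ} (hπ : IsPartitionInto π k) (x : V) :
    partOf π x ∈ π ∧ x ∈ partOf π x := by
  have h : ∃ A ∈ π, x ∈ A := hπ.2.2.2 x
  rw [partOf, dif_pos h]
  exact ⟨h.choose_spec.1, h.choose_spec.2⟩

lemma partOf_eq {π : Finset (Finset V)} {k : ℕ} (hπ : IsPartitionInto π k) {x : V}
    {A : Finset V} (hA : A ∈ π) (hx : x ∈ A) : partOf π x = A :=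
  part_unique hπ (partOf_mem hπ x).1 hA (partOf_mem hπ x).2 hx

def mergeParts (π : Finset (Finset V)) (A B : Finset V) : Finset (Finset V) :=
  insert (A ∪ B) ((π.erase A).erase B)

noncomputable def mergeAt (ends : E → Sym2 V) (π : Finset (Finset V)) (e : E) :
    Finset (Finset V) :=
  mergeParts π (partOf π (ep1 (ends e))) (partOf π (ep2 (ends e)))

lemma union_not_mem {π : Finset (Finset V)} {k : ℕ} (hπ : IsPartitionInto π k)
    {A B : Finset V} (hA : A ∈ π) (hB : B ∈ π) (hAB : A ≠ B) :
    A ∪ B ∉ (π.erase A).erase B := by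
  intro hmem
  have hCπ : A ∪ B ∈ π := Finset.mem_of_mem_erase (Finset.mem_of_mem_erase hmem)
  have hCA : A ∪ B ≠ A := Finset.ne_of_mem_erase (Finset.mem_of_mem_erase hmem)
  obtain ⟨x, hx⟩ := hπ.2.1 A hA
  exact (Finset.disjoint_left.1 (hπ.2.2.1 (A ∪ B) hCπ A hA hCA)
    (Finset.mem_union_left _ hx)) hx

lemma isPartition_merge {π : Finset (Finset V)} {k : ℕ} (hπ : IsPartitionInto π k)
    {A B : Finset V} (hA : A ∈ π) (hB : B ∈ π) (hAB : A ≠ B) :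
    IsPartitionInto (mergeParts π A B) (k - 1) := by
  have hk2 : 2 ≤ k := by
    rw [← hπ.1]
    exact Finset.one_lt_card.2 ⟨A, hA, B, hB, hAB⟩
  have hBe : B ∈ π.erase A := Finset.mem_erase.2 ⟨fun h => hAB h.symm, hB⟩
  constructor
  · rw [mergeParts, Finset.card_insert_of_notMem (union_not_mem hπ hA hB hAB),
      Finset.card_erase_of_mem hBe, Finset.card_erase_of_mem hA, hπ.1]
    omega
  refine ⟨?_, ?_, ?_⟩
  · intro C hC
    rcases Finset.mem_insert.1 hC with rfl | hC
    · exact (hπ.2.1 A hA).mono Finset.subset_union_left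
    · exact hπ.2.1 C (Finset.mem_of_mem_erase (Finset.mem_of_mem_erase hC))
  · intro C hC D hD hCD
    rcases Finset.mem_insert.1 hC with rfl | hC <;> rcases Finset.mem_insert.1 hD with rfl | hD
    · exact absurd rfl hCD
    · have hDπ := Finset.mem_of_mem_erase (Finset.mem_of_mem_erase hD)
      have hDA : D ≠ A := Finset.ne_of_mem_erase (Finset.mem_of_mem_erase hD)
      have hDB : D ≠ B := Finset.ne_of_mem_erase hD
      rw [Finset.disjoint_union_left]
      exact ⟨(hπ.2.2.1 A hA D hDπ (fun h => hDA h.symm)).symm.symm,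
        (hπ.2.2.1 B hB D hDπ (fun h => hDB h.symm))⟩
    · have hCπ := Finset.mem_of_mem_erase (Finset.mem_of_mem_erase hC)
      have hCA : C ≠ A := Finset.ne_of_mem_erase (Finset.mem_of_mem_erase hC)
      have hCB : C ≠ B := Finset.ne_of_mem_erase hC
      rw [Finset.disjoint_union_right]
      exact ⟨hπ.2.2.1 C hCπ A hA hCA, hπ.2.2.1 C hCπ B hB hCB⟩
    · exact hπ.2.2.1 C (Finset.mem_of_mem_erase (Finset.mem_of_mem_erase hC)) D
        (Finset.mem_of_mem_erase (Finset.mem_of_mem_erase hD)) hCD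
  · intro x
    obtain ⟨C, hC, hxC⟩ := hπ.2.2.2 x
    by_cases hCA : C = A
    · exact ⟨A ∪ B, Finset.mem_insert_self _ _, Finset.mem_union_left _ (hCA ▸ hxC)⟩
    by_cases hCB : C = B
    · exact ⟨A ∪ B, Finset.mem_insert_self _ _, Finset.mem_union_right _ (hCB ▸ hxC)⟩
    · exact ⟨C, Finset.mem_insert_of_mem (Finset.mem_erase.2 ⟨hCB, Finset.mem_erase.2 ⟨hCA, hC⟩⟩),
        hxC⟩

lemma crossing_parts_ne {π : Finset (Finset V)} {k : ℕ} (hπ : IsPartitionInto π k)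
    {ends : E → Sym2 V} {e : E} (he : rCrosses ends π e) :
    partOf π (ep1 (ends e)) ≠ partOf π (ep2 (ends e)) := by
  intro h
  refine he ⟨partOf π (ep1 (ends e)), (partOf_mem hπ _).1, ?_⟩
  intro z hz
  rcases mem_ends_iff.1 hz with rfl | rfl
  · exact (partOf_mem hπ _).2
  · exact h ▸ (partOf_mem hπ _).2

lemma isPartition_mergeAt {π : Finset (Finset V)} {k : ℕ} (hπ : IsPartitionInto π k)
    {ends : E → Sym2 V} {e : E} (he : rCrosses ends π e) :
    IsPartitionInto (mergeAt ends π e) (k - 1) :=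
  isPartition_merge hπ (partOf_mem hπ _).1 (partOf_mem hπ _).1 (crossing_parts_ne hπ he)

lemma coarsens_mergeAt_iff {π : Finset (Finset V)} {k : ℕ} (hπ : IsPartitionInto π k)
    {ends : E → Sym2 V} {e : E} (he : rCrosses ends π e)
    {P : Finset (Finset V)} {r : ℕ} (hP : IsPartitionInto P r) :
    Coarsens (mergeAt ends π e) P ↔ (Coarsens π P ∧ ¬ rCrosses ends P e) := by
  set A := partOf π (ep1 (ends e)) with hA
  set B := partOf π (ep2 (ends e)) with hB
  constructor
  · intro h
    have hsub : ∀ C ∈ π, ∃ D ∈ P, C ⊆ D := by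
      intro C hC
      by_cases hCA : C = A
      · obtain ⟨D, hD, hsub⟩ := h (A ∪ B) (Finset.mem_insert_self _ _)
        exact ⟨D, hD, hCA ▸ (Finset.subset_union_left.trans hsub)⟩
      by_cases hCB : C = B
      · obtain ⟨D, hD, hsub⟩ := h (A ∪ B) (Finset.mem_insert_self _ _)
        exact ⟨D, hD, hCB ▸ (Finset.subset_union_right.trans hsub)⟩
      · exact h C (Finset.mem_insert_of_mem
          (Finset.mem_erase.2 ⟨hCB, Finset.mem_erase.2 ⟨hCA, hC⟩⟩))
    refine ⟨hsub, ?_⟩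
    obtain ⟨D, hD, hsubD⟩ := h (A ∪ B) (Finset.mem_insert_self _ _)
    rw [rCrosses]; push_neg
    refine ⟨D, hD, ?_⟩
    intro z hz
    rcases mem_ends_iff.1 hz with rfl | rfl
    · exact hsubD (Finset.mem_union_left _ (partOf_mem hπ _).2)
    · exact hsubD (Finset.mem_union_right _ (partOf_mem hπ _).2)
  · rintro ⟨hco, hnc⟩
    rw [rCrosses] at hnc; push_neg at hnc
    obtain ⟨D, hD, hall⟩ := hnc
    intro C hC
    rcases Finset.mem_insert.1 hC with rfl | hC
    · refine ⟨D, hD, ?_⟩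
      have hAD : A ⊆ D := by
        obtain ⟨D', hD', hsub'⟩ := hco A (partOf_mem hπ _).1
        have : D' = D := part_unique hP hD' hD (hsub' (partOf_mem hπ _).2)
          (hall _ (mem_ends_iff.2 (Or.inl rfl)))
        exact this ▸ hsub'
      have hBD : B ⊆ D := by
        obtain ⟨D', hD', hsub'⟩ := hco B (partOf_mem hπ _).1
        have : D' = D := part_unique hP hD' hD (hsub' (partOf_mem hπ _).2)
          (hall _ (mem_ends_iff.2 (Or.inr rfl)))
        exact this ▸ hsub'
      exact Finset.union_subset hAD hBD
    · exact hco C (Finset.mem_of_mem_erase (Finset.mem_of_mem_erase hC))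

/-- the recursion inequality -/
lemma cnt_rec (ends : E → Sym2 V) (r s : ℕ) {π : Finset (Finset V)} {k : ℕ}
    (hπ : IsPartitionInto π k) :
    cnt ends r s π * (rCutValue ends π - s) ≤
      ∑ e ∈ rCutEdges ends π, cnt ends r s (mergeAt ends π e) := by
  classical
  set Sπ := (Finset.univ : Finset (Finset (Finset V))).filter
    (fun P => IsPartitionInto P r ∧ rCutValue ends P ≤ s ∧ Coarsens π P) with hSπ
  set X := rCutEdges ends π with hX
  have key : ∀ e ∈ X, (Sπ.filter (fun P => ¬ rCrosses ends P e)).card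
      ≤ cnt ends r s (mergeAt ends π e) := by
    intro e heX
    have he : rCrosses ends π e := (Finset.mem_filter.1 heX).2
    apply Finset.card_le_card
    intro P hP
    simp only [Finset.mem_filter, Finset.mem_univ, true_and, hSπ] at hP ⊢
    obtain ⟨⟨h1, h2, h3⟩, h4⟩ := hP
    exact ⟨h1, h2, (coarsens_mergeAt_iff hπ he h1).2 ⟨h3, h4⟩⟩
  calc cnt ends r s π * (rCutValue ends π - s)
      ≤ ∑ P ∈ Sπ, (X.filter (fun e => ¬ rCrosses ends P e)).card := by
        rw [cnt, ← hSπ]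
        rw [← Finset.sum_const_nat (m := rCutValue ends π - s) (fun x h => rfl)] at *
        · apply Finset.sum_le_sum
          intro P hP
          simp only [Finset.mem_filter, hSπ] at hP
          have h2 : (rCutValue ends P) ≤ s := hP.2.2.1
          have hsplit : X.card ≤ (X.filter (fun e => ¬ rCrosses ends P e)).card + s := by
            have : X.card = (X.filter (fun e => ¬ rCrosses ends P e)).card
                + (X.filter (fun e => rCrosses ends P e)).card := by
              rw [add_comm, Finset.card_filter_add_card_filter_not]
            rw [this]
            have : (X.filter (fun e => rCrosses ends P e)).card ≤ rCutValue ends P := by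
              apply Finset.card_le_card
              intro e hee
              simp only [Finset.mem_filter, rCutEdges, Finset.mem_univ, true_and] at hee ⊢
              exact hee.2
            omega
          have hm : rCutValue ends π = X.card := rfl
          omega
    _ = ∑ e ∈ X, (Sπ.filter (fun P => ¬ rCrosses ends P e)).card := by
        simp_rw [Finset.card_filter]
        rw [Finset.sum_comm]
    _ ≤ ∑ e ∈ X, cnt ends r s (mergeAt ends π e) := Finset.sum_le_sum key

/-- the filter of parts crossed by an edge has cardinality 2 or 0 -/
lemma crossing_parts_card {P : Finset (Finset V)} {k : ℕ} (hP : IsPartitionInto P k)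
    (ends : E → Sym2 V) (e : E) :
    (P.filter (fun A => crosses ends A e)).card = if rCrosses ends P e then 2 else 0 := by
  set x := ep1 (ends e) with hx
  set y := ep2 (ends e) with hy
  have hmem : ∀ z : V, z ∈ ends e ↔ z = x ∨ z = y := fun z => mem_ends_iff
  obtain ⟨Ax, hAx, hxAx⟩ := hP.2.2.2 x
  obtain ⟨Ay, hAy, hyAy⟩ := hP.2.2.2 y
  by_cases hsame : Ax = Ay
  · -- not crossing, filter empty
    have hnc : ¬ rCrosses ends P e := by
      rw [rCrosses]; push_neg
      refine ⟨Ax, hAx, ?_⟩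
      intro z hz
      rcases (hmem z).1 hz with rfl | rfl
      · exact hxAx
      · exact hsame ▸ hyAy
    rw [if_neg hnc]
    rw [Finset.card_eq_zero, Finset.filter_eq_empty_iff]
    rintro A hA ⟨⟨u, hu, huA⟩, ⟨v, hv, hvA⟩⟩
    have hAu : A = Ax ∨ A = Ay := by
      rcases (hmem u).1 hu with rfl | rfl
      · exact Or.inl (part_unique hP hA hAx huA hxAx)
      · exact Or.inr (part_unique hP hA hAy huA hyAy)
    have : v ∈ A → False := fun h => hvA h
    rcases (hmem v).1 hv with rfl | rfl
    · rcases hAu with rfl | rfl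
      · exact hvA hxAx
      · exact hvA (hsame ▸ hxAx)
    · rcases hAu with rfl | rfl
      · exact hvA (hsame.symm ▸ hyAy)
      · exact hvA hyAy
  · -- crossing
    have hxy : x ≠ y := fun h => hsame (part_unique hP hAx hAy hxAx (h ▸ hyAy))
    have hc : rCrosses ends P e := by
      rintro ⟨A, hA, hall⟩
      have h1 : x ∈ A := hall x ((hmem x).2 (Or.inl rfl))
      have h2 : y ∈ A := hall y ((hmem y).2 (Or.inr rfl))
      exact hsame ((part_unique hP hAx hA hxAx h1).trans (part_unique hP hA hAy h2 hyAy))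
    rw [if_pos hc]
    have : P.filter (fun A => crosses ends A e) = {Ax, Ay} := by
      ext A
      simp only [Finset.mem_filter, Finset.mem_insert, Finset.mem_singleton]
      constructor
      · rintro ⟨hA, ⟨u, hu, huA⟩, _⟩
        rcases (hmem u).1 hu with rfl | rfl
        · exact Or.inl (part_unique hP hA hAx huA hxAx)
        · exact Or.inr (part_unique hP hA hAy huA hyAy)
      · rintro (rfl | rfl)
        · refine ⟨hAx, ⟨x, (hmem x).2 (Or.inl rfl), hxAx⟩, ⟨y, (hmem y).2 (Or.inr rfl), ?_⟩⟩
          exact fun hyA => hsame (part_unique hP hAx hAy hyA hyAy)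
        · refine ⟨hAy, ⟨y, (hmem y).2 (Or.inr rfl), hyAy⟩, ⟨x, (hmem x).2 (Or.inl rfl), ?_⟩⟩
          exact fun hxA => hsame (part_unique hP hAx hAy hxAx hxA)
    rw [this, Finset.card_insert_of_notMem (by simpa using hsame), Finset.card_singleton]

lemma sum_cutValue {P : Finset (Finset V)} {k : ℕ} (hP : IsPartitionInto P k)
    (ends : E → Sym2 V) :
    ∑ A ∈ P, cutValue ends A = 2 * rCutValue ends P := by
  have : ∀ A, cutValue ends A = ∑ e : E, if crosses ends A e then 1 else 0 := by
    intro A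
    rw [cutValue, cutEdges, Finset.card_filter]
  simp_rw [this]
  rw [Finset.sum_comm]
  have : ∀ e : E, (∑ A ∈ P, if crosses ends A e then 1 else 0) =
      if rCrosses ends P e then 2 else 0 := by
    intro e
    rw [← Finset.card_filter]
    exact crossing_parts_card hP ends e
  simp_rw [this]
  rw [rCutValue, rCutEdges, Finset.card_filter, Finset.mul_sum]
  congr 1
  ext e
  split <;> simp

lemma compl_nonempty {P : Finset (Finset V)} {k : ℕ} (hP : IsPartitionInto P k)
    (hk : 2 ≤ k) {A : Finset V} (hA : A ∈ P) : Aᶜ.Nonempty := by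
  obtain ⟨B, hB, hBA⟩ := Finset.exists_mem_ne (by rw [hP.1]; omega : 1 < P.card) A
  obtain ⟨z, hz⟩ := hP.2.1 B hB
  exact ⟨z, Finset.mem_compl.2 fun hzA =>
    (Finset.disjoint_left.1 (hP.2.2.1 B hB A hA hBA) hz) hzA⟩

lemma rc_lower {P : Finset (Finset V)} {k c : ℕ} (hP : IsPartitionInto P k) (hk : 2 ≤ k)
    (ends : E → Sym2 V)
    (hmin : ∀ A : Finset V, A.Nonempty → Aᶜ.Nonempty → c ≤ cutValue ends A) :
    k * c ≤ 2 * rCutValue ends P := by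
  rw [← sum_cutValue hP ends, ← hP.1]
  have := Finset.card_nsmul_le_sum P (cutValue ends) c
    (fun A hA => hmin A (hP.2.1 A hA) (compl_nonempty hP hk hA))
  simpa [smul_eq_mul] using this


lemma pow_le_fact_aux : ∀ t r : ℕ, 1 ≤ r → t ≤ r → r ^ t ≤ t.factorial * r.descFactorial t := by
  intro t
  induction t with
  | zero => intro r _ _; simp
  | succ t ih =>
    intro r hr ht
    have h1 : r ^ t ≤ t.factorial * r.descFactorial t := ih r hr (by omega)
    rw [pow_succ, Nat.factorial_succ, Nat.descFactorial_succ]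
    have key : r ≤ (t + 1) * (r - t) := by
      have hu : 1 ≤ r - t := by omega
      have h3 : t * 1 ≤ t * (r - t) := Nat.mul_le_mul_left t hu
      have h4 : (t + 1) * (r - t) = t * (r - t) + (r - t) := by ring
      omega
    calc r ^ t * r ≤ (t.factorial * r.descFactorial t) * ((t+1) * (r - t)) :=
          Nat.mul_le_mul h1 key
      _ = (t + 1) * t.factorial * ((r - t) * r.descFactorial t) := by ring

lemma descFactorial_mono_aux (r : ℕ) : ∀ d t, t + d ≤ r →
    r.descFactorial t ≤ r.descFactorial (t + d) := by
  intro d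
  induction d with
  | zero => intro t _; simp
  | succ d ih =>
    intro t ht
    have h1 : r.descFactorial t ≤ r.descFactorial (t + d) := ih t (by omega)
    have h2 : r.descFactorial (t + d) ≤ r.descFactorial (t + d + 1) := by
      rw [Nat.descFactorial_succ]
      exact Nat.le_mul_of_pos_left (r.descFactorial (t+d)) (show 0 < r - (t+d) by omega)
    calc r.descFactorial t ≤ r.descFactorial (t + d) := h1
      _ ≤ r.descFactorial (t + (d+1)) := by rw [← Nat.add_assoc]; exact h2

lemma descFactorial_le_factorial (r t : ℕ) (ht : t ≤ r) : r.descFactorial t ≤ r.factorial := by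
  have := descFactorial_mono_aux r (r - t) t (by omega)
  have h5 : t + (r - t) = r := by omega
  rwa [h5, Nat.descFactorial_self] at this

lemma pow_le_factorial_mul (r t : ℕ) (hr : 1 ≤ r) : r ^ t ≤ r.factorial * t.factorial := by
  rcases le_or_gt t r with h | h
  · have := pow_le_fact_aux t r hr h
    have h2 : r.descFactorial t ≤ r.factorial := descFactorial_le_factorial r t h
    calc r ^ t ≤ t.factorial * r.descFactorial t := this
      _ ≤ t.factorial * r.factorial := Nat.mul_le_mul_left _ h2
      _ = r.factorial * t.factorial := Nat.mul_comm _ _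
  · -- t > r
    have hrr : r ^ r ≤ r.factorial * r.factorial := by
      have := pow_le_fact_aux r r hr le_rfl
      rwa [Nat.descFactorial_self, Nat.mul_comm] at this
    have hstep : ∀ u : ℕ, r.factorial * r ^ u ≤ (r + u).factorial := by
      intro u
      induction u with
      | zero => simp
      | succ u ihu =>
        rw [pow_succ, ← Nat.mul_assoc, Nat.add_succ, Nat.factorial_succ]
        calc r.factorial * r ^ u * r ≤ (r + u).factorial * r := Nat.mul_le_mul_right _ ihu
          _ = r * (r + u).factorial := Nat.mul_comm _ _
          _ ≤ (r + u + 1) * (r + u).factorial :=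
              Nat.mul_le_mul_right _ (by omega)
    have h3 : r ^ t = r ^ r * r ^ (t - r) := by rw [← pow_add]; congr 1; omega
    have h4 := hstep (t - r)
    have h5 : r + (t - r) = t := by omega
    rw [h5] at h4
    calc r ^ t = r ^ r * r ^ (t - r) := h3
      _ ≤ (r.factorial * r.factorial) * r ^ (t - r) := Nat.mul_le_mul_right _ hrr
      _ = r.factorial * (r.factorial * r ^ (t - r)) := by ring
      _ ≤ r.factorial * t.factorial := Nat.mul_le_mul_left _ h4




section S4B

variable {V E : Type} [Fintype V] [DecidableEq V] [Fintype E]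

noncomputable def pickEl {V : Type} (t : Finset (Finset V)) : Finset V :=
  if h : t.Nonempty then h.choose else ∅

lemma pickEl_mem {V : Type} {t : Finset (Finset V)} (h : t.Nonempty) : pickEl t ∈ t := by
  rw [pickEl, dif_pos h]; exact h.choose_spec

noncomputable def contPart {V : Type} (P : Finset (Finset V)) (A : Finset V) : Finset V :=
  if h : ∃ C ∈ P, A ⊆ C then h.choose else ∅

lemma contPart_spec {P : Finset (Finset V)} {A : Finset V} (h : ∃ C ∈ P, A ⊆ C) :
    contPart P A ∈ P ∧ A ⊆ contPart P A := by
  rw [contPart, dif_pos h]; exact ⟨h.choose_spec.1, h.choose_spec.2⟩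

lemma sub_unique {P : Finset (Finset V)} {r : ℕ} (hP : IsPartitionInto P r) {A C C' : Finset V}
    (hA : A.Nonempty) (hC : C ∈ P) (hC' : C' ∈ P) (h1 : A ⊆ C) (h2 : A ⊆ C') : C = C' := by
  obtain ⟨x, hx⟩ := hA
  exact part_unique hP hC hC' (h1 hx) (h2 hx)

lemma contPart_eq {P : Finset (Finset V)} {r : ℕ} (hP : IsPartitionInto P r) {A C : Finset V}
    (hA : A.Nonempty) (hC : C ∈ P) (hsub : A ⊆ C) : contPart P A = C := by
  have h : ∃ C ∈ P, A ⊆ C := ⟨C, hC, hsub⟩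
  exact sub_unique hP hA (contPart_spec h).1 hC (contPart_spec h).2 hsub

noncomputable def cls (π P : Finset (Finset V)) (A : Finset V) : Finset (Finset V) :=
  π.filter (fun A' => A' ⊆ contPart P A)

section ClsFacts
variable {π P : Finset (Finset V)} {k r : ℕ}
variable (hπ : IsPartitionInto π k) (hP : IsPartitionInto P r) (hco : Coarsens π P)
include hπ hP hco

lemma mem_cls_self {A : Finset V} (hA : A ∈ π) : A ∈ cls π P A :=
  Finset.mem_filter.2 ⟨hA, (contPart_spec (hco A hA)).2⟩

lemma contPart_mem {A : Finset V} (hA : A ∈ π) : contPart P A ∈ P :=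
  (contPart_spec (hco A hA)).1

lemma contPart_eq_of_mem_cls {A A' : Finset V} (hA : A ∈ π) (hA' : A' ∈ cls π P A) :
    contPart P A' = contPart P A := by
  have h1 := Finset.mem_filter.1 hA'
  exact contPart_eq hP (hπ.2.1 A' h1.1) (contPart_mem hπ hP hco hA) h1.2

lemma cls_eq_of_mem {A A' : Finset V} (hA : A ∈ π) (hA' : A' ∈ cls π P A) :
    cls π P A' = cls π P A := by
  rw [cls, cls, contPart_eq_of_mem_cls hπ hP hco hA hA']

lemma cls_nonempty {A : Finset V} (hA : A ∈ π) : (cls π P A).Nonempty :=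
  ⟨A, mem_cls_self hπ hP hco hA⟩

end ClsFacts

noncomputable def rho (π P : Finset (Finset V)) (a : {A // A ∈ π}) : {A // A ∈ π} :=
  if h : pickEl (cls π P a.1) ∈ π then ⟨pickEl (cls π P a.1), h⟩ else a

section RhoFacts
variable {π P : Finset (Finset V)} {k r : ℕ}
variable (hπ : IsPartitionInto π k) (hP : IsPartitionInto P r) (hco : Coarsens π P)
include hπ hP hco

lemma rho_val (a : {A // A ∈ π}) : (rho π P a).1 = pickEl (cls π P a.1) := by
  have hmem : pickEl (cls π P a.1) ∈ cls π P a.1 := pickEl_mem (cls_nonempty hπ hP hco a.2)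
  have : pickEl (cls π P a.1) ∈ π := (Finset.mem_filter.1 hmem).1
  rw [rho, dif_pos this]

lemma rho_mem_cls (a : {A // A ∈ π}) : (rho π P a).1 ∈ cls π P a.1 := by
  rw [rho_val hπ hP hco]
  exact pickEl_mem (cls_nonempty hπ hP hco a.2)

lemma rho_idem (a : {A // A ∈ π}) : rho π P (rho π P a) = rho π P a := by
  apply Subtype.ext
  rw [rho_val hπ hP hco, rho_val hπ hP hco]
  have h := cls_eq_of_mem hπ hP hco a.2 (rho_mem_cls hπ hP hco a)
  rw [rho_val hπ hP hco] at h
  rw [h]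

lemma part_recover {C : Finset V} (hC : C ∈ P) {A₀ : Finset V} (hA₀ : A₀ ∈ π)
    (hsub : A₀ ⊆ C) : (cls π P A₀).biUnion id = C := by
  have hcp : contPart P A₀ = C := contPart_eq hP (hπ.2.1 A₀ hA₀) hC hsub
  ext x
  simp only [Finset.mem_biUnion, id]
  constructor
  · rintro ⟨A, hA, hx⟩
    have := (Finset.mem_filter.1 hA).2
    rw [hcp] at this
    exact this hx
  · intro hx
    refine ⟨partOf π x, ?_, (partOf_mem hπ x).2⟩
    refine Finset.mem_filter.2 ⟨(partOf_mem hπ x).1, ?_⟩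
    rw [hcp]
    obtain ⟨D, hD, hAD⟩ := hco _ (partOf_mem hπ x).1
    have : D = C := part_unique hP hD hC (hAD (partOf_mem hπ x).2) hx
    exact this ▸ hAD

lemma cls_eq_fiber {A : Finset V} (hA : A ∈ π) :
    cls π P A = π.filter (fun A' => pickEl (cls π P A') = pickEl (cls π P A)) := by
  ext A'
  constructor
  · intro h
    have hA'π : A' ∈ π := (Finset.mem_filter.1 h).1
    refine Finset.mem_filter.2 ⟨hA'π, ?_⟩
    rw [cls_eq_of_mem hπ hP hco hA h]
  · intro h
    obtain ⟨hA'π, heq⟩ := Finset.mem_filter.1 h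
    have hR' : pickEl (cls π P A') ∈ cls π P A' := pickEl_mem (cls_nonempty hπ hP hco hA'π)
    have hR : pickEl (cls π P A) ∈ cls π P A := pickEl_mem (cls_nonempty hπ hP hco hA)
    rw [heq] at hR'
    have h1 : contPart P A' = contPart P (pickEl (cls π P A)) :=
      (contPart_eq_of_mem_cls hπ hP hco hA'π hR').symm
    have h2 : contPart P A = contPart P (pickEl (cls π P A)) :=
      (contPart_eq_of_mem_cls hπ hP hco hA hR).symm
    refine Finset.mem_filter.2 ⟨hA'π, ?_⟩
    have : A' ⊆ contPart P A' := (contPart_spec (hco A' hA'π)).2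
    rw [h1, ← h2] at this
    exact this

lemma rho_image_card :
    ((Finset.univ : Finset {A // A ∈ π}).image (rho π P)).card = r := by
  rw [← hP.1]
  apply Finset.card_bij (fun a _ => contPart P a.1)
  · intro a _
    exact contPart_mem hπ hP hco a.2
  · intro a ha a' ha' h
    obtain ⟨b, _, hb⟩ := Finset.mem_image.1 ha
    obtain ⟨b', _, hb'⟩ := Finset.mem_image.1 ha'
    have hfix : rho π P a = a := by rw [← hb, rho_idem hπ hP hco]
    have hfix' : rho π P a' = a' := by rw [← hb', rho_idem hπ hP hco]
    have e1 : a.1 = pickEl (cls π P a.1) := by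
      conv_lhs => rw [← hfix]
      exact rho_val hπ hP hco a
    have e1' : a'.1 = pickEl (cls π P a'.1) := by
      conv_lhs => rw [← hfix']
      exact rho_val hπ hP hco a'
    have : cls π P a.1 = cls π P a'.1 := by rw [cls, cls, h]
    apply Subtype.ext
    rw [e1, e1', this]
  · intro C hC
    obtain ⟨x, hx⟩ := hP.2.1 C hC
    have hA₀π : partOf π x ∈ π := (partOf_mem hπ x).1
    have hA₀C : partOf π x ⊆ C := by
      obtain ⟨D, hD, hAD⟩ := hco _ hA₀π
      have : D = C := part_unique hP hD hC (hAD (partOf_mem hπ x).2) hx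
      exact this ▸ hAD
    refine ⟨rho π P ⟨partOf π x, hA₀π⟩, Finset.mem_image_of_mem _ (Finset.mem_univ _), ?_⟩
    have h1 : (rho π P ⟨partOf π x, hA₀π⟩).1 ∈ cls π P (partOf π x) :=
      rho_mem_cls hπ hP hco ⟨partOf π x, hA₀π⟩
    obtain ⟨h1π, h1sub⟩ := Finset.mem_filter.1 h1
    have hcp : contPart P (partOf π x) = C := contPart_eq hP (hπ.2.1 _ hA₀π) hC hA₀C
    rw [hcp] at h1sub
    exact contPart_eq hP (hπ.2.1 _ h1π) hC h1sub

end RhoFacts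

lemma cnt_le_factorial (ends : E → Sym2 V) (r s : ℕ) {π : Finset (Finset V)} {k : ℕ}
    (hπ : IsPartitionInto π k) (hr : 1 ≤ r) :
    cnt ends r s π ≤ k.factorial := by
  classical
  set T := (Finset.univ : Finset ({A // A ∈ π} → {A // A ∈ π})).filter
    (fun f => (∀ a, f (f a) = f a) ∧
      ((Finset.univ : Finset {A // A ∈ π}).image f).card = r) with hT
  have hcard : Fintype.card {A // A ∈ π} = k := by
    rw [Fintype.card_coe, hπ.1]
  have step1 : cnt ends r s π ≤ T.card := by
    rw [cnt]
    apply Finset.card_le_card_of_injOn (fun P => rho π P)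
    · intro P hP
      simp only [Finset.mem_coe, Finset.mem_filter, Finset.mem_univ, true_and] at hP
      obtain ⟨hP1, _, hco⟩ := hP
      rw [hT]
      simp only [Finset.mem_coe, Finset.mem_filter, Finset.mem_univ, true_and]
      exact ⟨rho_idem hπ hP1 hco, rho_image_card hπ hP1 hco⟩
    · intro P hPm P' hP'm heq
      simp only [Finset.coe_filter, Finset.mem_univ, true_and, Set.mem_setOf_eq] at hPm hP'm
      obtain ⟨hP1, _, hco⟩ := hPm
      obtain ⟨hP1', _, hco'⟩ := hP'm
      have hpick : ∀ A, A ∈ π → pickEl (cls π P A) = pickEl (cls π P' A) := by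
        intro A hA
        have := congrFun heq ⟨A, hA⟩
        have h1 := rho_val hπ hP1 hco ⟨A, hA⟩
        have h2 := rho_val hπ hP1' hco' ⟨A, hA⟩
        rw [← h1, ← h2]
        exact congrArg Subtype.val this
      have hcls : ∀ A, A ∈ π → cls π P A = cls π P' A := by
        intro A hA
        rw [cls_eq_fiber hπ hP1 hco hA, cls_eq_fiber hπ hP1' hco' hA]
        apply Finset.filter_congr
        intro A' hA'
        rw [hpick A' hA', hpick A hA]
      have key : ∀ {Q Q' : Finset (Finset V)}, IsPartitionInto Q r → Coarsens π Q →
          IsPartitionInto Q' r → Coarsens π Q' →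
          (∀ A, A ∈ π → cls π Q A = cls π Q' A) → Q ⊆ Q' := by
        intro Q Q' hQ hcoQ hQ' hcoQ' hc C hC
        obtain ⟨x, hx⟩ := hQ.2.1 C hC
        have hA₀π : partOf π x ∈ π := (partOf_mem hπ x).1
        have hA₀C : partOf π x ⊆ C := by
          obtain ⟨D, hD, hAD⟩ := hcoQ _ hA₀π
          have : D = C := part_unique hQ hD hC (hAD (partOf_mem hπ x).2) hx
          exact this ▸ hAD
        have h1 : (cls π Q (partOf π x)).biUnion id = C :=
          part_recover hπ hQ hcoQ hC hA₀π hA₀C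
        have hC' := contPart_spec (hcoQ' _ hA₀π)
        have h2 : (cls π Q' (partOf π x)).biUnion id = contPart Q' (partOf π x) :=
          part_recover hπ hQ' hcoQ' hC'.1 hA₀π hC'.2
        have : C = contPart Q' (partOf π x) := by rw [← h1, hc _ hA₀π, h2]
        rw [this]
        exact hC'.1
      exact Finset.Subset.antisymm (key hP1 hco hP1' hco' hcls)
        (key hP1' hco' hP1 hco (fun A hA => (hcls A hA).symm))
  have step2 : T.card ≤ k.choose r * r ^ (k - r) := by
    have hfib := Finset.card_eq_sum_card_fiberwise
      (f := fun f : {A // A ∈ π} → {A // A ∈ π} => (Finset.univ : Finset {A // A ∈ π}).image f)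
      (s := T) (t := Finset.powersetCard r (Finset.univ : Finset {A // A ∈ π}))
      (by
        intro f hf
        rw [Finset.mem_coe, Finset.mem_powersetCard]
        rw [hT] at hf
        simp only [Finset.mem_coe, Finset.mem_filter] at hf
        exact ⟨Finset.subset_univ _, hf.2.2⟩)
    rw [hfib]
    have hbound : ∀ s₀ ∈ Finset.powersetCard r (Finset.univ : Finset {A // A ∈ π}),
        (T.filter (fun f => (Finset.univ : Finset {A // A ∈ π}).image f = s₀)).card
          ≤ r ^ (k - r) := by
      intro s₀ hs₀
      rw [Finset.mem_powersetCard] at hs₀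
      have hfun : Fintype.card ({y // y ∈ (Finset.univ : Finset {A // A ∈ π}) \ s₀} →
          {y // y ∈ s₀}) = r ^ (k - r) := by
        rw [Fintype.card_fun, Fintype.card_coe, Fintype.card_coe,
          Finset.card_sdiff_of_subset (Finset.subset_univ _), Finset.card_univ, hcard, hs₀.2]
      have hs₀ne : s₀.Nonempty := Finset.card_pos.1 (by rw [hs₀.2]; omega)
      set y₀ : {y // y ∈ s₀} := ⟨hs₀ne.choose, hs₀ne.choose_spec⟩ with hy₀
      calc (T.filter (fun f => (Finset.univ : Finset {A // A ∈ π}).image f = s₀)).card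
          ≤ (Finset.univ : Finset ({y // y ∈ (Finset.univ : Finset {A // A ∈ π}) \ s₀} →
              {y // y ∈ s₀})).card := by
            apply Finset.card_le_card_of_injOn
              (fun f => fun x => if h : f x.1 ∈ s₀ then (⟨f x.1, h⟩ : {y // y ∈ s₀}) else y₀)
            · intro f _; exact Finset.mem_univ _
            · intro f hfm g hgm heq
              simp only [Finset.coe_filter, Set.mem_setOf_eq, hT, Finset.mem_filter,
                Finset.mem_univ, true_and] at hfm hgm
              obtain ⟨⟨hfidem, _⟩, hfimg⟩ := hfm
              obtain ⟨⟨hgidem, _⟩, hgimg⟩ := hgm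
              funext a
              by_cases ha : a ∈ s₀
              · have hfa : f a = a := by
                  rw [← hfimg] at ha
                  obtain ⟨b, _, hb⟩ := Finset.mem_image.1 ha
                  rw [← hb, hfidem]
                have hga : g a = a := by
                  rw [← hgimg] at ha
                  obtain ⟨b, _, hb⟩ := Finset.mem_image.1 ha
                  rw [← hb, hgidem]
                rw [hfa, hga]
              · have ha' : a ∈ (Finset.univ : Finset {A // A ∈ π}) \ s₀ :=
                  Finset.mem_sdiff.2 ⟨Finset.mem_univ _, ha⟩
                have hthis := congrFun heq ⟨a, ha'⟩
                have hfa : f a ∈ s₀ := by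
                  rw [← hfimg]
                  exact Finset.mem_image_of_mem _ (Finset.mem_univ _)
                have hga : g a ∈ s₀ := by
                  rw [← hgimg]
                  exact Finset.mem_image_of_mem _ (Finset.mem_univ _)
                simp only [hfa, hga, dif_pos] at hthis
                exact congrArg Subtype.val hthis
        _ = r ^ (k - r) := by rw [Finset.card_univ, hfun]
    calc ∑ s₀ ∈ Finset.powersetCard r (Finset.univ : Finset {A // A ∈ π}),
          (T.filter (fun f => (Finset.univ : Finset {A // A ∈ π}).image f = s₀)).card
        ≤ ∑ s₀ ∈ Finset.powersetCard r (Finset.univ : Finset {A // A ∈ π}), r ^ (k - r) :=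
          Finset.sum_le_sum hbound
      _ = (Finset.powersetCard r (Finset.univ : Finset {A // A ∈ π})).card * r ^ (k - r) := by
          rw [Finset.sum_const, smul_eq_mul]
      _ = k.choose r * r ^ (k - r) := by
          rw [Finset.card_powersetCard, Finset.card_univ, hcard]
  have step3 : k.choose r * r ^ (k - r) ≤ k.factorial := by
    rcases le_or_gt r k with h | h
    · have h1 : r ^ (k - r) ≤ r.factorial * (k - r).factorial := pow_le_factorial_mul r (k - r) hr
      calc k.choose r * r ^ (k - r) ≤ k.choose r * (r.factorial * (k - r).factorial) :=
            Nat.mul_le_mul_left _ h1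
        _ = k.choose r * r.factorial * (k - r).factorial := by ring
        _ = k.factorial := Nat.choose_mul_factorial_mul_factorial h
    · rw [Nat.choose_eq_zero_of_lt h]
      simp
  omega


end S4B


section S5

variable {V E : Type} [Fintype V] [DecidableEq V] [Fintype E]

lemma cnt_unroll (ends : E → Sym2 V) {c : ℕ} (hc : 1 ≤ c)
    (hmin : ∀ A : Finset V, A.Nonempty → Aᶜ.Nonempty → c ≤ cutValue ends A)
    (r s b : ℕ) (hr : 2 ≤ r) (hrb : r ≤ b) (hbs : 2 * s ≤ b * c) :
    ∀ j : ℕ, ∀ π : Finset (Finset V), IsPartitionInto π (b + j) →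
      (cnt ends r s π : ℝ) ≤ (b.factorial : ℝ) *
        ∏ i ∈ Finset.range j,
          (((b + i + 1 : ℕ) : ℝ) * c) / (((b + i + 1 : ℕ) : ℝ) * c - 2 * s) := by
  have hposden : ∀ i : ℕ, (0:ℝ) < ((b + i + 1 : ℕ) : ℝ) * c - 2 * s := by
    intro i
    have hnat : 2 * s + 1 ≤ (b + i + 1) * c := by
      have h1 : (b + i + 1) * c = b * c + (i + 1) * c := by ring
      have h2 : c ≤ (i + 1) * c := Nat.le_mul_of_pos_left c (by omega)
      omega
    have := (Nat.cast_le (α := ℝ)).2 hnat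
    push_cast at this ⊢
    linarith
  have hfac_nonneg : ∀ j : ℕ, (0:ℝ) ≤ ∏ i ∈ Finset.range j,
      (((b + i + 1 : ℕ) : ℝ) * c) / (((b + i + 1 : ℕ) : ℝ) * c - 2 * s) := by
    intro j
    apply Finset.prod_nonneg
    intro i _
    apply div_nonneg
    · positivity
    · exact le_of_lt (hposden i)
  intro j
  induction j with
  | zero =>
    intro π hπ
    rw [Finset.range_zero, Finset.prod_empty, mul_one]
    exact_mod_cast cnt_le_factorial ends r s (by simpa using hπ) (by omega)
  | succ j ih =>
    intro π hπ
    set k := b + (j + 1) with hk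
    set m := rCutValue ends π with hm
    have hk2 : 2 ≤ k := by omega
    have hmlow : k * c ≤ 2 * m := rc_lower hπ hk2 ends hmin
    have hms : s < m := by
      have h1 : k * c = b * c + (j + 1) * c := by rw [hk]; ring
      have h2 : c ≤ (j + 1) * c := Nat.le_mul_of_pos_left c (by omega)
      omega
    have hrec := cnt_rec ends r s hπ
    rw [← hm] at hrec
    set Bj := (b.factorial : ℝ) * ∏ i ∈ Finset.range j,
      (((b + i + 1 : ℕ) : ℝ) * c) / (((b + i + 1 : ℕ) : ℝ) * c - 2 * s) with hBj
    have hBj_nonneg : 0 ≤ Bj := mul_nonneg (by positivity) (hfac_nonneg j)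
    have hsum : (∑ e ∈ rCutEdges ends π, (cnt ends r s (mergeAt ends π e) : ℝ)) ≤
        (m : ℝ) * Bj := by
      have hper : ∀ e ∈ rCutEdges ends π, (cnt ends r s (mergeAt ends π e) : ℝ) ≤ Bj := by
        intro e he
        have hcross : rCrosses ends π e := (Finset.mem_filter.1 he).2
        have hpart : IsPartitionInto (mergeAt ends π e) (b + j) := by
          have := isPartition_mergeAt hπ hcross
          simpa [hk, Nat.add_sub_cancel] using this
        exact ih (mergeAt ends π e) hpart
      calc (∑ e ∈ rCutEdges ends π, (cnt ends r s (mergeAt ends π e) : ℝ))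
          ≤ (rCutEdges ends π).card • Bj := Finset.sum_le_card_nsmul _ _ _ hper
        _ = (m : ℝ) * Bj := by rw [nsmul_eq_mul]; rfl
    have h1 : (cnt ends r s π : ℝ) * ((m : ℝ) - s) ≤ (m : ℝ) * Bj := by
      have hcast : ((cnt ends r s π * (m - s) : ℕ) : ℝ) =
          (cnt ends r s π : ℝ) * ((m : ℝ) - s) := by
        push_cast [Nat.cast_sub (le_of_lt hms)]
        ring
      calc (cnt ends r s π : ℝ) * ((m : ℝ) - s) = ((cnt ends r s π * (m - s) : ℕ) : ℝ) :=
            hcast.symm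
        _ ≤ ((∑ e ∈ rCutEdges ends π, cnt ends r s (mergeAt ends π e) : ℕ) : ℝ) :=
            Nat.cast_le.2 hrec
        _ = ∑ e ∈ rCutEdges ends π, (cnt ends r s (mergeAt ends π e) : ℝ) := by push_cast; rfl
        _ ≤ (m : ℝ) * Bj := hsum
    have hd : (0:ℝ) < (m : ℝ) - s := by
      have := (Nat.cast_lt (α := ℝ)).2 hms
      linarith
    have h2 : (cnt ends r s π : ℝ) ≤ ((m : ℝ) / ((m : ℝ) - s)) * Bj := by
      rw [div_mul_eq_mul_div, le_div_iff₀ hd]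
      exact h1
    have h3 : (m : ℝ) / ((m : ℝ) - s) ≤
        ((k : ℕ) : ℝ) * c / (((k : ℕ) : ℝ) * c - 2 * s) := by
      have hKpos : (0:ℝ) < ((k : ℕ) : ℝ) * c - 2 * s := by
        have := hposden j
        have hkk : ((b + j + 1 : ℕ) : ℝ) = ((k:ℕ) : ℝ) := by norm_cast
        rwa [hkk] at this
      have hK2m : ((k : ℕ) : ℝ) * c ≤ 2 * m := by
        have := (Nat.cast_le (α := ℝ)).2 hmlow
        push_cast at this
        linarith
      rw [div_le_div_iff₀ hd hKpos]
      have hs0 : (0:ℝ) ≤ (s:ℝ) := Nat.cast_nonneg s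
      nlinarith
    calc (cnt ends r s π : ℝ) ≤ ((m : ℝ) / ((m : ℝ) - s)) * Bj := h2
      _ ≤ (((k : ℕ) : ℝ) * c / (((k : ℕ) : ℝ) * c - 2 * s)) * Bj :=
          mul_le_mul_of_nonneg_right h3 hBj_nonneg
      _ = (b.factorial : ℝ) * ∏ i ∈ Finset.range (j+1),
          (((b + i + 1 : ℕ) : ℝ) * c) / (((b + i + 1 : ℕ) : ℝ) * c - 2 * s) := by
        rw [Finset.prod_range_succ, hBj]
        have hkk : ((b + j + 1 : ℕ) : ℝ) = ((k:ℕ) : ℝ) := by norm_cast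
        rw [hkk]
        ring


end S5
section S6

variable {V E : Type} [Fintype V] [DecidableEq V] [Fintype E]

lemma fact_prod_shift (b : ℕ) : ∀ j : ℕ,
    b.factorial * ∏ i ∈ Finset.range j, (b + i + 1) = (b + j).factorial := by
  intro j
  induction j with
  | zero => simp
  | succ j ih =>
    rw [Finset.prod_range_succ, ← Nat.mul_assoc, ih, ← Nat.add_assoc, Nat.factorial_succ,
      Nat.mul_comm]

lemma prod_shift_two (j : ℕ) : (∏ i ∈ Finset.range j, (i + 2)) = (j + 1).factorial := by
  induction j with
  | zero => simp
  | succ j ih => rw [Finset.prod_range_succ, ih, Nat.factorial_succ (j+1), Nat.mul_comm]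

lemma factorial_le_pow_sub_one : ∀ n : ℕ, n.factorial ≤ n ^ (n - 1)
  | 0 => by simp
  | 1 => by simp
  | (n+2) => by
    have ih := factorial_le_pow_sub_one (n+1)
    rw [Nat.factorial_succ]
    have h1 : (n+1) ^ (n+1-1) ≤ (n+2) ^ n := by
      simpa using Nat.pow_le_pow_left (by omega : n+1 ≤ n+2) n
    calc (n+2) * (n+1).factorial ≤ (n+2) * ((n+1) ^ (n+1-1)) := Nat.mul_le_mul_left _ ih
      _ ≤ (n+2) * (n+2) ^ n := Nat.mul_le_mul_left _ h1
      _ = (n+2) ^ (n+1) := by rw [← pow_succ']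
      _ = (n+2) ^ (n+2-1) := by norm_num

/-- The key analytic bound: `b! * ∏ (kc)/(kc-2s) ≤ n ^ (2s/c)` where `n = b+j`,
assuming `(b-1) c < 2 s ≤ b c`. -/
lemma prod_bound (b j c s : ℕ) (hc : 1 ≤ c) (hb1 : 1 ≤ b)
    (hβub : 2 * s ≤ b * c) (hβlb : (b - 1) * c < 2 * s) :
    (b.factorial : ℝ) * ∏ i ∈ Finset.range j,
        (((b + i + 1 : ℕ) : ℝ) * c) / (((b + i + 1 : ℕ) : ℝ) * c - 2 * s)
      ≤ ((b + j : ℕ) : ℝ) ^ (2 * (s : ℝ) / c) := by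
  have hcR : (0:ℝ) < (c:ℝ) := by exact_mod_cast hc
  obtain ⟨β, hβdef⟩ : ∃ x : ℝ, x = 2 * (s:ℝ) / (c:ℝ) := ⟨_, rfl⟩
  obtain ⟨θ, hθdef⟩ : ∃ x : ℝ, x = β - ((b:ℝ) - 1) := ⟨_, rfl⟩
  have hβub' : β ≤ (b:ℝ) := by
    rw [hβdef, div_le_iff₀ hcR]
    have h := (Nat.cast_le (α := ℝ)).2 hβub
    push_cast at h
    linarith
  have hβlb' : (b:ℝ) - 1 < β := by
    rw [hβdef, lt_div_iff₀ hcR]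
    have h := (Nat.cast_lt (α := ℝ)).2 hβlb
    push_cast [Nat.cast_sub hb1] at h
    linarith
  have hθ0 : 0 < θ := by rw [hθdef]; linarith
  have hθ1 : θ ≤ 1 := by rw [hθdef]; linarith
  have hdenom_pos : ∀ i : ℕ, (0:ℝ) < ((b + i + 1 : ℕ) : ℝ) * c - 2 * s := by
    intro i
    have hnat : 2 * s + 1 ≤ (b + i + 1) * c := by
      have h2 : (b+i+1) * c = b * c + (i + 1) * c := by ring
      have h3 : c ≤ (i + 1) * c := Nat.le_mul_of_pos_left c (by omega)
      omega
    have h := (Nat.cast_le (α := ℝ)).2 hnat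
    push_cast at h ⊢
    linarith
  -- per-factor bound
  have hfac : ∀ i ∈ Finset.range j,
      (((b + i + 1 : ℕ) : ℝ) * c) / (((b + i + 1 : ℕ) : ℝ) * c - 2 * s) ≤
        ((((b + i + 1 : ℕ) : ℝ)) / ((i:ℝ) + 1)) ^ θ *
        ((((b + i + 1 : ℕ) : ℝ)) / ((i:ℝ) + 2)) ^ (1 - θ) := by
    intro i _
    set K : ℝ := ((b + i + 1 : ℕ) : ℝ) with hK
    have hKval : K = (b:ℝ) + i + 1 := by rw [hK]; push_cast; ring
    have hKpos : 0 < K := by rw [hKval]; positivity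
    have hamgm : ((i:ℝ) + 1) ^ θ * ((i:ℝ) + 2) ^ (1 - θ) ≤ K - β := by
      have hgm := Real.geom_mean_le_arith_mean2_weighted (w₁ := θ) (w₂ := 1-θ)
        (p₁ := (i:ℝ)+1) (p₂ := (i:ℝ)+2)
        (le_of_lt hθ0) (by linarith) (by positivity) (by positivity) (by ring)
      have heq : θ * ((i:ℝ)+1) + (1-θ) * ((i:ℝ)+2) = K - β := by
        rw [hKval, hθdef]; ring
      linarith
    have hdpos : (0:ℝ) < ((i:ℝ) + 1) ^ θ * ((i:ℝ) + 2) ^ (1 - θ) := by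
      apply mul_pos <;> exact Real.rpow_pos_of_pos (by positivity) _
    have hKβpos : 0 < K - β := lt_of_lt_of_le hdpos hamgm
    have hKc : K * c - 2 * s = (K - β) * c := by
      rw [hβdef]; field_simp
    have step1 : K * c / (K * c - 2 * s) = K / (K - β) := by
      rw [hKc, mul_comm (K - β) (c:ℝ), ← div_div, mul_div_assoc, div_self (ne_of_gt hcR), mul_one]
    rw [step1]
    have step2 : K / (K - β) ≤ K / (((i:ℝ) + 1) ^ θ * ((i:ℝ) + 2) ^ (1 - θ)) :=
      div_le_div_of_nonneg_left (le_of_lt hKpos) hdpos hamgm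
    have step3 : K / (((i:ℝ) + 1) ^ θ * ((i:ℝ) + 2) ^ (1 - θ)) =
        (K / ((i:ℝ) + 1)) ^ θ * (K / ((i:ℝ) + 2)) ^ (1 - θ) := by
      rw [Real.div_rpow (le_of_lt hKpos) (by positivity),
        Real.div_rpow (le_of_lt hKpos) (by positivity)]
      rw [div_mul_div_comm, ← Real.rpow_add hKpos]
      have h11 : θ + (1 - θ) = 1 := by ring
      rw [h11, Real.rpow_one]
    rw [step3] at step2
    exact step2
  -- product bound
  have hprod : (∏ i ∈ Finset.range j,
      (((b + i + 1 : ℕ) : ℝ) * c) / (((b + i + 1 : ℕ) : ℝ) * c - 2 * s)) ≤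
      ((∏ i ∈ Finset.range j, (((b + i + 1 : ℕ) : ℝ)) / ((i:ℝ) + 1)) ^ θ) *
      ((∏ i ∈ Finset.range j, (((b + i + 1 : ℕ) : ℝ)) / ((i:ℝ) + 2)) ^ (1 - θ)) := by
    have h1 : (∏ i ∈ Finset.range j,
        (((b + i + 1 : ℕ) : ℝ) * c) / (((b + i + 1 : ℕ) : ℝ) * c - 2 * s)) ≤
        ∏ i ∈ Finset.range j,
          ((((b + i + 1 : ℕ) : ℝ)) / ((i:ℝ) + 1)) ^ θ *
          ((((b + i + 1 : ℕ) : ℝ)) / ((i:ℝ) + 2)) ^ (1 - θ) := by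
      apply Finset.prod_le_prod
      · intro i _
        exact div_nonneg (by positivity) (le_of_lt (hdenom_pos i))
      · exact hfac
    rw [Finset.prod_mul_distrib] at h1
    rw [Real.finset_prod_rpow _ _ (fun i _ => by positivity) θ,
      Real.finset_prod_rpow _ _ (fun i _ => by positivity) (1-θ)] at h1
    exact h1
  -- identify the two products
  set n := b + j with hn
  have hX : (∏ i ∈ Finset.range j, (((b + i + 1 : ℕ) : ℝ)) / ((i:ℝ) + 1)) =
      (n.factorial : ℝ) / ((b.factorial : ℝ) * (j.factorial : ℝ)) := by
    rw [Finset.prod_div_distrib]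
    have e1 : (∏ i ∈ Finset.range j, (((b + i + 1 : ℕ) : ℝ))) =
        ((∏ i ∈ Finset.range j, (b + i + 1) : ℕ) : ℝ) := by push_cast; rfl
    have e2 : (∏ i ∈ Finset.range j, ((i:ℝ) + 1)) = (j.factorial : ℝ) := by
      rw [← Finset.prod_range_add_one_eq_factorial]; push_cast; rfl
    rw [e1, e2]
    have e3 := fact_prod_shift b j
    have hbf : (0:ℝ) < (b.factorial : ℝ) := by exact_mod_cast Nat.factorial_pos b
    have hjf : (0:ℝ) < (j.factorial : ℝ) := by exact_mod_cast Nat.factorial_pos j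
    rw [div_eq_div_iff (by positivity) (by positivity)]
    have e4 : (b.factorial : ℝ) * ((∏ i ∈ Finset.range j, (b + i + 1) : ℕ) : ℝ)
        = (n.factorial : ℝ) := by exact_mod_cast congrArg (Nat.cast (R := ℝ)) e3
    calc ((∏ i ∈ Finset.range j, (b + i + 1) : ℕ) : ℝ) * ((b.factorial : ℝ) * (j.factorial : ℝ))
        = ((b.factorial : ℝ) * ((∏ i ∈ Finset.range j, (b + i + 1) : ℕ) : ℝ)) * (j.factorial : ℝ) := by ring
      _ = (n.factorial : ℝ) * (j.factorial : ℝ) := by rw [e4]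
  have hY : (∏ i ∈ Finset.range j, (((b + i + 1 : ℕ) : ℝ)) / ((i:ℝ) + 2)) =
      (n.factorial : ℝ) / ((b.factorial : ℝ) * ((j+1).factorial : ℝ)) := by
    rw [Finset.prod_div_distrib]
    have e1 : (∏ i ∈ Finset.range j, (((b + i + 1 : ℕ) : ℝ))) =
        ((∏ i ∈ Finset.range j, (b + i + 1) : ℕ) : ℝ) := by push_cast; rfl
    have e2 : (∏ i ∈ Finset.range j, ((i:ℝ) + 2)) = ((j+1).factorial : ℝ) := by
      rw [← prod_shift_two]; push_cast; rfl
    rw [e1, e2]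
    have e3 := fact_prod_shift b j
    rw [div_eq_div_iff (by positivity) (by positivity)]
    have e4 : (b.factorial : ℝ) * ((∏ i ∈ Finset.range j, (b + i + 1) : ℕ) : ℝ)
        = (n.factorial : ℝ) := by exact_mod_cast congrArg (Nat.cast (R := ℝ)) e3
    calc ((∏ i ∈ Finset.range j, (b + i + 1) : ℕ) : ℝ) * ((b.factorial : ℝ) * (((j+1)).factorial : ℝ))
        = ((b.factorial : ℝ) * ((∏ i ∈ Finset.range j, (b + i + 1) : ℕ) : ℝ)) * (((j+1)).factorial : ℝ) := by ring
      _ = (n.factorial : ℝ) * (((j+1)).factorial : ℝ) := by rw [e4]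
  -- bound the two products by powers
  have hnb : b ≤ n := by omega
  have hXle : (n.factorial : ℝ) / ((b.factorial : ℝ) * (j.factorial : ℝ)) ≤
      ((n:ℝ) ^ (b:ℕ)) / (b.factorial : ℝ) := by
    have hid : (n - b).factorial * n.descFactorial b = n.factorial :=
      Nat.factorial_mul_descFactorial hnb
    have hj : n - b = j := by omega
    rw [hj] at hid
    have hd : n.descFactorial b ≤ n ^ b := Nat.descFactorial_le_pow n b
    rw [div_le_div_iff₀ (by positivity) (by positivity)]
    have hfact : (n.factorial : ℝ) = (j.factorial : ℝ) * (n.descFactorial b : ℝ) := by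
      exact_mod_cast congrArg (Nat.cast (R := ℝ)) hid.symm
    rw [hfact]
    have hdR : (n.descFactorial b : ℝ) ≤ ((n:ℝ) ^ (b:ℕ)) := by exact_mod_cast hd
    calc (j.factorial : ℝ) * (n.descFactorial b : ℝ) * (b.factorial : ℝ)
        ≤ (j.factorial : ℝ) * ((n:ℝ) ^ (b:ℕ)) * (b.factorial : ℝ) := by
          apply mul_le_mul_of_nonneg_right _ (by positivity)
          exact mul_le_mul_of_nonneg_left hdR (by positivity)
      _ = (n:ℝ) ^ (b:ℕ) * ((b.factorial : ℝ) * (j.factorial : ℝ)) := by ring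
  have hYle : (n.factorial : ℝ) / ((b.factorial : ℝ) * ((j+1).factorial : ℝ)) ≤
      ((n:ℝ) ^ (b-1:ℕ)) / (b.factorial : ℝ) := by
    have hb1n : b - 1 ≤ n := by omega
    have hid : (n - (b-1)).factorial * n.descFactorial (b-1) = n.factorial :=
      Nat.factorial_mul_descFactorial hb1n
    have hj : n - (b-1) = j + 1 := by omega
    rw [hj] at hid
    have hd : n.descFactorial (b-1) ≤ n ^ (b-1) := Nat.descFactorial_le_pow n (b-1)
    rw [div_le_div_iff₀ (by positivity) (by positivity)]
    have hfact : (n.factorial : ℝ) = ((j+1).factorial : ℝ) * (n.descFactorial (b-1) : ℝ) := by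
      exact_mod_cast congrArg (Nat.cast (R := ℝ)) hid.symm
    rw [hfact]
    have hdR : (n.descFactorial (b-1) : ℝ) ≤ ((n:ℝ) ^ (b-1:ℕ)) := by exact_mod_cast hd
    calc ((j+1).factorial : ℝ) * (n.descFactorial (b-1) : ℝ) * (b.factorial : ℝ)
        ≤ ((j+1).factorial : ℝ) * ((n:ℝ) ^ (b-1:ℕ)) * (b.factorial : ℝ) := by
          apply mul_le_mul_of_nonneg_right _ (by positivity)
          exact mul_le_mul_of_nonneg_left hdR (by positivity)
      _ = (n:ℝ) ^ (b-1:ℕ) * ((b.factorial : ℝ) * ((j+1).factorial : ℝ)) := by ring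
  have hXnn : (0:ℝ) ≤ (n.factorial : ℝ) / ((b.factorial : ℝ) * (j.factorial : ℝ)) := by positivity
  have hYnn : (0:ℝ) ≤ (n.factorial : ℝ) / ((b.factorial : ℝ) * ((j+1).factorial : ℝ)) := by
    positivity
  -- final combination
  have hnpos : (0:ℝ) < (n:ℝ) := by
    have h1 : 1 ≤ n := by omega
    exact_mod_cast h1
  have hn1 : (1:ℝ) ≤ (n:ℝ) := by
    have h1 : 1 ≤ n := by omega
    exact_mod_cast h1
  have hbfpos : (0:ℝ) < (b.factorial : ℝ) := by exact_mod_cast Nat.factorial_pos b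
  have hfin : (b.factorial : ℝ) *
      ((((n:ℝ) ^ (b:ℕ)) / (b.factorial : ℝ)) ^ θ *
       (((n:ℝ) ^ (b-1:ℕ)) / (b.factorial : ℝ)) ^ (1-θ))
        ≤ ((n:ℝ)) ^ β := by
    have e1 : (((n:ℝ) ^ (b:ℕ)) / (b.factorial : ℝ)) ^ θ =
        ((n:ℝ) ^ ((b:ℕ):ℝ)) ^ θ / (b.factorial : ℝ) ^ θ := by
      rw [Real.div_rpow (by positivity) (by positivity), Real.rpow_natCast]
    have e2 : (((n:ℝ) ^ (b-1:ℕ)) / (b.factorial : ℝ)) ^ (1-θ) =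
        ((n:ℝ) ^ (((b-1:ℕ)):ℝ)) ^ (1-θ) / (b.factorial : ℝ) ^ (1-θ) := by
      rw [Real.div_rpow (by positivity) (by positivity), Real.rpow_natCast]
    rw [e1, e2, div_mul_div_comm, ← Real.rpow_add hbfpos]
    have h11 : θ + (1 - θ) = 1 := by ring
    rw [h11, Real.rpow_one]
    rw [← Real.rpow_mul (le_of_lt hnpos), ← Real.rpow_mul (le_of_lt hnpos),
      ← Real.rpow_add hnpos]
    have hexp : ((b:ℕ):ℝ) * θ + (((b-1:ℕ)):ℝ) * (1-θ) = β := by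
      have hcast : (((b-1:ℕ)):ℝ) = (b:ℝ) - 1 := by
        rw [Nat.cast_sub hb1]; norm_num
      rw [hcast, hθdef]; ring
    rw [hexp]
    have heqq : (b.factorial:ℝ) * ((n:ℝ) ^ β / (b.factorial:ℝ)) = (n:ℝ) ^ β := by
      field_simp
    exact le_of_eq heqq
  -- assemble
  have hmain : (b.factorial : ℝ) * ∏ i ∈ Finset.range j,
      (((b + i + 1 : ℕ) : ℝ) * c) / (((b + i + 1 : ℕ) : ℝ) * c - 2 * s) ≤ (n:ℝ) ^ β := by
    calc (b.factorial : ℝ) * ∏ i ∈ Finset.range j,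
        (((b + i + 1 : ℕ) : ℝ) * c) / (((b + i + 1 : ℕ) : ℝ) * c - 2 * s)
        ≤ (b.factorial : ℝ) *
          (((n.factorial : ℝ) / ((b.factorial : ℝ) * (j.factorial : ℝ))) ^ θ *
           ((n.factorial : ℝ) / ((b.factorial : ℝ) * ((j+1).factorial : ℝ))) ^ (1-θ)) := by
          apply mul_le_mul_of_nonneg_left _ (by positivity)
          rw [← hX, ← hY]
          exact hprod
      _ ≤ (b.factorial : ℝ) *
          ((((n:ℝ) ^ (b:ℕ)) / (b.factorial : ℝ)) ^ θ *
           (((n:ℝ) ^ (b-1:ℕ)) / (b.factorial : ℝ)) ^ (1-θ)) := by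
          apply mul_le_mul_of_nonneg_left _ (by positivity)
          apply mul_le_mul
          · exact Real.rpow_le_rpow hXnn hXle (le_of_lt hθ0)
          · exact Real.rpow_le_rpow hYnn hYle (by linarith)
          · exact Real.rpow_nonneg hYnn _
          · exact Real.rpow_nonneg (by positivity) _
      _ ≤ (n:ℝ) ^ β := hfin
  rw [hβdef] at hmain
  exact hmain


end S6


section S8

variable {V E : Type} [Fintype V] [DecidableEq V] [Fintype E]

lemma sum_pow_binom (p : ℝ) (s : Finset E) :
    ∑ G ∈ s.powerset, p ^ G.card * (1 - p) ^ (s.card - G.card) = 1 := by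
  have h := Finset.prod_add (fun _ : E => p) (fun _ : E => 1 - p) s
  simp only [Finset.prod_const] at h
  have h2 : ∀ G ∈ s.powerset, p ^ G.card * (1-p) ^ (s \ G).card
      = p ^ G.card * (1 - p) ^ (s.card - G.card) := by
    intro G hG
    rw [Finset.card_sdiff_of_subset (Finset.mem_powerset.1 hG)]
  rw [Finset.sum_congr rfl h2] at h
  have h3 : (p + (1 - p)) = 1 := by ring
  rw [h3, one_pow] at h
  exact h.symm

lemma sum_superset (p : ℝ) (B : Finset E) :
    ∑ F ∈ Finset.univ.filter (fun F : Finset E => B ⊆ F),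
      p ^ F.card * (1 - p) ^ (Fintype.card E - F.card) = p ^ B.card := by
  classical
  have hbij : ∑ F ∈ Finset.univ.filter (fun F : Finset E => B ⊆ F),
      p ^ F.card * (1 - p) ^ (Fintype.card E - F.card)
      = ∑ G ∈ Bᶜ.powerset, p ^ (B.card + G.card) * (1 - p) ^ (Bᶜ.card - G.card) := by
    apply Finset.sum_bij' (fun F _ => F \ B) (fun G _ => G ∪ B)
    · intro F hF
      rw [Finset.mem_powerset]
      intro x hx
      rw [Finset.mem_sdiff] at hx
      exact Finset.mem_compl.2 hx.2
    · intro G _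
      rw [Finset.mem_filter]
      exact ⟨Finset.mem_univ _, Finset.subset_union_right⟩
    · intro F hF
      rw [Finset.mem_filter] at hF
      rw [Finset.sdiff_union_self_eq_union, Finset.union_eq_left.2 hF.2]
    · intro G hG
      rw [Finset.mem_powerset] at hG
      rw [Finset.union_sdiff_right]
      exact Finset.sdiff_eq_self_of_disjoint
        (Finset.disjoint_right.2 (fun a haB haG => (Finset.mem_compl.1 (hG haG)) haB))
    · intro F hF
      rw [Finset.mem_filter] at hF
      have h1 : (F \ B).card = F.card - B.card := Finset.card_sdiff_of_subset hF.2
      have h2 : B.card ≤ F.card := Finset.card_le_card hF.2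
      have e1 : B.card + (F \ B).card = F.card := by omega
      have e2 : Bᶜ.card - (F \ B).card = Fintype.card E - F.card := by
        rw [Finset.card_compl]
        have h3 : F.card ≤ Fintype.card E := Finset.card_le_univ F
        omega
      rw [e1, e2]
  rw [hbij]
  have h4 : ∀ G ∈ Bᶜ.powerset, p ^ (B.card + G.card) * (1 - p) ^ (Bᶜ.card - G.card)
      = p ^ B.card * (p ^ G.card * (1 - p) ^ (Bᶜ.card - G.card)) := by
    intro G _
    rw [pow_add]
    ring
  rw [Finset.sum_congr rfl h4, ← Finset.mul_sum, sum_pow_binom p Bᶜ, mul_one]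

lemma failure_le_sum (ends : E → Sym2 V) (p : ℝ) (hp0 : 0 ≤ p) (hp1 : p ≤ 1) (r : ℕ) :
    failurePr p (Finset.univ.filter (fun F : Finset E =>
        ∃ P : Finset (Finset V), IsPartitionInto P r ∧ rCutEdges ends P ⊆ F))
      ≤ ∑ P ∈ (Finset.univ : Finset (Finset (Finset V))).filter
            (fun P => IsPartitionInto P r),
          p ^ (rCutValue ends P) := by
  classical
  set m := Fintype.card E with hm
  set w : Finset E → ℝ := fun F => p ^ F.card * (1 - p) ^ (m - F.card) with hw
  have hwnn : ∀ F, 0 ≤ w F := by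
    intro F
    apply mul_nonneg (pow_nonneg hp0 _) (pow_nonneg (by linarith) _)
  set Sev := Finset.univ.filter (fun F : Finset E =>
    ∃ P : Finset (Finset V), IsPartitionInto P r ∧ rCutEdges ends P ⊆ F) with hSev
  set SP := (Finset.univ : Finset (Finset (Finset V))).filter
    (fun P => IsPartitionInto P r) with hSP
  have step1 : failurePr p Sev ≤
      ∑ F ∈ Sev, ∑ P ∈ SP, (if rCutEdges ends P ⊆ F then w F else 0) := by
    rw [failurePr]
    apply Finset.sum_le_sum
    intro F hF
    rw [hSev, Finset.mem_filter] at hF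
    obtain ⟨_, P₀, hP₀, hsub₀⟩ := hF
    have hP₀SP : P₀ ∈ SP := by rw [hSP, Finset.mem_filter]; exact ⟨Finset.mem_univ _, hP₀⟩
    calc p ^ F.card * (1 - p) ^ (m - F.card) = w F := rfl
      _ = (if rCutEdges ends P₀ ⊆ F then w F else 0) := by rw [if_pos hsub₀]
      _ ≤ ∑ P ∈ SP, (if rCutEdges ends P ⊆ F then w F else 0) := by
          apply Finset.single_le_sum (f := fun P => if rCutEdges ends P ⊆ F then w F else 0)
            (fun P _ => by
              by_cases h : rCutEdges ends P ⊆ F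
              · simpa [h] using hwnn F
              · simp [h]) hP₀SP
  have step2 : ∑ F ∈ Sev, ∑ P ∈ SP, (if rCutEdges ends P ⊆ F then w F else 0)
      = ∑ P ∈ SP, ∑ F ∈ Sev, (if rCutEdges ends P ⊆ F then w F else 0) :=
    Finset.sum_comm
  have step3 : ∀ P ∈ SP, (∑ F ∈ Sev, (if rCutEdges ends P ⊆ F then w F else 0))
      ≤ p ^ (rCutValue ends P) := by
    intro P _
    have h5 : (∑ F ∈ Sev, (if rCutEdges ends P ⊆ F then w F else 0))
        = ∑ F ∈ Sev.filter (fun F => rCutEdges ends P ⊆ F), w F :=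
      (Finset.sum_filter _ _).symm
    rw [h5]
    have h6 : ∑ F ∈ Sev.filter (fun F => rCutEdges ends P ⊆ F), w F
        ≤ ∑ F ∈ Finset.univ.filter (fun F : Finset E => rCutEdges ends P ⊆ F), w F := by
      apply Finset.sum_le_sum_of_subset_of_nonneg
      · intro F hF
        rw [Finset.mem_filter] at hF ⊢
        exact ⟨Finset.mem_univ _, hF.2⟩
      · intro F _ _
        exact hwnn F
    have h7 : ∑ F ∈ Finset.univ.filter (fun F : Finset E => rCutEdges ends P ⊆ F), w F
        = p ^ (rCutValue ends P) := sum_superset p (rCutEdges ends P)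
    rw [← h7]
    exact h6
  calc failurePr p Sev ≤ ∑ F ∈ Sev, ∑ P ∈ SP, (if rCutEdges ends P ⊆ F then w F else 0) := step1
    _ = ∑ P ∈ SP, ∑ F ∈ Sev, (if rCutEdges ends P ⊆ F then w F else 0) := step2
    _ ≤ ∑ P ∈ SP, p ^ (rCutValue ends P) := Finset.sum_le_sum step3

lemma sum_le_sorted {ι : Type} (g : ℝ → ℝ)
    (hg : ∀ x y : ℝ, 1 ≤ x → x ≤ y → g y ≤ g x) :
    ∀ (N : ℕ) (S : Finset ι) (u : ι → ℝ), S.card = N →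
    (∀ P ∈ S, 1 ≤ u P) →
    (∀ P ∈ S, ((S.filter (fun Q => u Q ≤ u P)).card : ℝ) ≤ u P) →
    ∑ P ∈ S, g (u P) ≤ ∑ j ∈ Finset.Icc 1 N, g j := by
  intro N
  induction N with
  | zero =>
    intro S u hcard _ _
    rw [Finset.card_eq_zero.1 hcard]
    simp
  | succ N ih =>
    intro S u hcard hu1 hcnt
    have hne : S.Nonempty := Finset.card_pos.1 (by omega)
    obtain ⟨b, hb, hbmax⟩ := Finset.exists_max_image S u hne
    have hfull : S.filter (fun Q => u Q ≤ u b) = S := by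
      apply Finset.filter_true_of_mem
      intro Q hQ
      exact hbmax Q hQ
    have hSb : ((S.card : ℕ) : ℝ) ≤ u b := by
      have := hcnt b hb
      rwa [hfull] at this
    have hgb : g (u b) ≤ g ((N:ℝ) + 1) := by
      apply hg
      · have h0 : (0:ℝ) ≤ (N:ℝ) := Nat.cast_nonneg N
        linarith
      · rw [hcard] at hSb
        push_cast at hSb
        linarith
    have herase : ∑ P ∈ S.erase b, g (u P) ≤ ∑ j ∈ Finset.Icc 1 N, g j := by
      apply ih (S.erase b) u
      · rw [Finset.card_erase_of_mem hb, hcard]; omega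
      · intro P hP
        exact hu1 P (Finset.mem_of_mem_erase hP)
      · intro P hP
        have hsub : (S.erase b).filter (fun Q => u Q ≤ u P) ⊆
            S.filter (fun Q => u Q ≤ u P) := by
          exact Finset.filter_subset_filter _ (Finset.erase_subset _ _)
        have h8 : (((S.erase b).filter (fun Q => u Q ≤ u P)).card : ℝ)
            ≤ ((S.filter (fun Q => u Q ≤ u P)).card : ℝ) := by
          exact_mod_cast Finset.card_le_card hsub
        exact le_trans h8 (hcnt P (Finset.mem_of_mem_erase hP))
    calc ∑ P ∈ S, g (u P) = ∑ P ∈ S.erase b, g (u P) + g (u b) :=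
          (Finset.sum_erase_add S _ hb).symm
      _ ≤ ∑ j ∈ Finset.Icc 1 N, g j + g ((N:ℝ)+1) := add_le_add herase hgb
      _ = ∑ j ∈ Finset.Icc 1 (N+1), g j := by
          rw [Finset.sum_Icc_succ_top (by omega : 1 ≤ N + 1)]
          push_cast
          ring_nf

lemma tail_ptwise (a : ℝ) (ha : 0 < a) (M : ℕ) (hM : 1 ≤ M) :
    (((M+1:ℕ)):ℝ) ^ (-(1+a)) ≤ (1/a) * ((((M:ℕ)):ℝ) ^ (-a) - (((M+1:ℕ)):ℝ) ^ (-a)) := by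
  set x : ℝ := ((M:ℕ):ℝ) with hx
  have hx1 : (1:ℝ) ≤ x := by rw [hx]; exact_mod_cast hM
  have hxpos : 0 < x := by linarith
  set y : ℝ := x + 1 with hy
  have hypos : (0:ℝ) < y := by linarith
  have hycast : (((M+1:ℕ)):ℝ) = y := by rw [hy, hx]; push_cast; ring
  rw [hycast]
  -- key : (x/y)^a * (1 + a/y) ≤ 1
  have hxy : 0 < x / y := div_pos hxpos hypos
  have hlog : Real.log (x / y) ≤ -1/y := by
    have h1 : Real.log (x/y) ≤ x/y - 1 := Real.log_le_sub_one_of_pos hxy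
    have h2 : x/y - 1 = -1/y := by rw [hy]; field_simp; ring
    linarith
  have hkey : (x/y) ^ a * (1 + a/y) ≤ 1 := by
    have h3 : (x/y) ^ a = Real.exp (a * Real.log (x/y)) := by
      rw [Real.rpow_def_of_pos hxy]
      ring_nf
    have h4 : (x/y) ^ a ≤ Real.exp (-(a/y)) := by
      rw [h3]
      apply Real.exp_le_exp.2
      calc a * Real.log (x/y) ≤ a * (-1/y) := by
            apply mul_le_mul_of_nonneg_left hlog (le_of_lt ha)
        _ = -(a/y) := by ring
    have h5 : 1 + a/y ≤ Real.exp (a/y) := by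
      have := Real.add_one_le_exp (a/y)
      linarith
    calc (x/y) ^ a * (1 + a/y) ≤ Real.exp (-(a/y)) * Real.exp (a/y) := by
          apply mul_le_mul h4 h5 (by positivity) (le_of_lt (Real.exp_pos _))
      _ = 1 := by rw [← Real.exp_add]; ring_nf; exact Real.exp_zero
  -- deduce : y^(-a) * (1 + a/y) ≤ x^(-a)
  have hstep : y ^ (-a) * (1 + a/y) ≤ x ^ (-a) := by
    have h6 : x ^ (-a) = y ^ (-a) * (x/y) ^ (-a) := by
      rw [← Real.mul_rpow (le_of_lt hypos) (le_of_lt hxy)]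
      congr 1
      field_simp
    rw [h6]
    have h7 : (1 + a/y) ≤ (x/y) ^ (-a) := by
      have h8 : (x/y) ^ (-a) = ((x/y) ^ a)⁻¹ := Real.rpow_neg (le_of_lt hxy) a
      rw [h8]
      have hpa : (0:ℝ) < (x/y) ^ a := Real.rpow_pos_of_pos hxy a
      have h9 := mul_le_mul_of_nonneg_left hkey (le_of_lt (inv_pos.2 hpa))
      rw [← mul_assoc, inv_mul_cancel₀ (ne_of_gt hpa), one_mul, mul_one] at h9
      exact h9
    exact mul_le_mul_of_nonneg_left h7 (Real.rpow_nonneg (le_of_lt hypos) _)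
  -- rearrange
  have hyy : y ^ (-(1+a)) = y ^ (-a) / y := by
    rw [div_eq_mul_inv, ← Real.rpow_neg_one y, ← Real.rpow_add hypos]
    congr 1
    ring
  have hexpand : y ^ (-a) * (1 + a/y) = y ^ (-a) + a * (y ^ (-a) / y) := by
    field_simp
  rw [hexpand] at hstep
  rw [hyy]
  have h10 : a * (y ^ (-a) / y) ≤ x ^ (-a) - y ^ (-a) := by linarith
  calc y ^ (-a) / y = (1/a) * (a * (y ^ (-a) / y)) := by
        field_simp
    _ ≤ (1/a) * (x ^ (-a) - y ^ (-a)) :=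
        mul_le_mul_of_nonneg_left h10 (by positivity)


end S8


section S7

variable {V E : Type} [Fintype V] [DecidableEq V] [Fintype E]

lemma discrete_partition : IsPartitionInto
    ((Finset.univ : Finset V).image (fun x => ({x} : Finset V))) (Fintype.card V) := by
  refine ⟨?_, ?_, ?_, ?_⟩
  · rw [Finset.card_image_of_injective _ (fun a b h => Finset.singleton_injective h),
      Finset.card_univ]
  · intro A hA
    obtain ⟨x, _, rfl⟩ := Finset.mem_image.1 hA
    exact ⟨x, Finset.mem_singleton_self x⟩
  · intro A hA B hB hAB
    obtain ⟨x, _, rfl⟩ := Finset.mem_image.1 hA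
    obtain ⟨y, _, rfl⟩ := Finset.mem_image.1 hB
    rw [Finset.disjoint_left]
    intro a ha hb
    rw [Finset.mem_singleton] at ha hb
    subst ha
    subst hb
    exact hAB rfl
  · intro x
    exact ⟨{x}, Finset.mem_image_of_mem _ (Finset.mem_univ x), Finset.mem_singleton_self x⟩

/-- The central counting bound: the number of `r`-way cuts of value at most `s`
is at most `n ^ (2 s / c)`. -/
lemma count_le (ends : E → Sym2 V) {c : ℕ} (hc : 1 ≤ c)
    (hmin : ∀ A : Finset V, A.Nonempty → Aᶜ.Nonempty → c ≤ cutValue ends A)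
    (hn2 : 2 ≤ Fintype.card V)
    (r : ℕ) (hr : 2 ≤ r) (s : ℕ) (hs : r * c ≤ 2 * s) :
    (((Finset.univ : Finset (Finset (Finset V))).filter
        (fun P => IsPartitionInto P r ∧ rCutValue ends P ≤ s)).card : ℝ)
      ≤ ((Fintype.card V : ℕ) : ℝ) ^ (2 * (s : ℝ) / c) := by
  classical
  set nV := Fintype.card V with hnV
  -- the count equals `cnt` of the discrete partition
  have hcnteq : ((Finset.univ : Finset (Finset (Finset V))).filter
      (fun P => IsPartitionInto P r ∧ rCutValue ends P ≤ s)).card =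
      cnt ends r s ((Finset.univ : Finset V).image (fun x => ({x} : Finset V))) := by
    rw [cnt]
    congr 1
    apply Finset.filter_congr
    intro P _
    constructor
    · rintro ⟨h1, h2⟩
      refine ⟨h1, h2, ?_⟩
      intro A hA
      obtain ⟨x, _, rfl⟩ := Finset.mem_image.1 hA
      obtain ⟨B, hB, hxB⟩ := h1.2.2.2 x
      exact ⟨B, hB, Finset.singleton_subset_iff.2 hxB⟩
    · rintro ⟨h1, h2, _⟩
      exact ⟨h1, h2⟩
  rw [hcnteq]
  -- set up b
  have hs1 : 1 ≤ s := by nlinarith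
  set b := (2 * s + c - 1) / c with hb
  have hbc : 2 * s ≤ b * c ∧ b * c < 2 * s + c := by
    have h1 := Nat.div_add_mod (2 * s + c - 1) c
    have h2 : (2 * s + c - 1) % c < c := Nat.mod_lt _ (by omega)
    have h3 : b * c + (2 * s + c - 1) % c = 2 * s + c - 1 := by
      rw [hb, Nat.mul_comm]
      exact h1
    constructor
    · -- 2s ≤ b*c
      generalize hX : b * c = X at h3 ⊢
      omega
    · generalize hX : b * c = X at h3 ⊢
      omega
  have hrb : r ≤ b := by
    have h4 : r * c ≤ b * c := le_trans hs hbc.1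
    exact Nat.le_of_mul_le_mul_right h4 (by omega)
  have hb1 : 1 ≤ b := by omega
  have hblb : (b - 1) * c < 2 * s := by
    have h5 : (b - 1) * c + c = b * c := by
      rw [Nat.sub_one_mul]
      have : c ≤ b * c := Nat.le_mul_of_pos_left c (by omega)
      omega
    generalize hX : (b-1) * c = X at h5 ⊢
    have := hbc.2
    omega
  rcases le_or_gt b nV with hcase | hcase
  · -- main case: unroll the recursion
    set j := nV - b with hj
    have hbj : b + j = nV := by omega
    have hπ : IsPartitionInto ((Finset.univ : Finset V).image (fun x => ({x} : Finset V)))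
        (b + j) := by
      rw [hbj]
      exact discrete_partition
    have h1 := cnt_unroll ends hc hmin r s b hr hrb hbc.1 j _ hπ
    have h2 := prod_bound b j c s hc hb1 hbc.1 hblb
    rw [hbj] at h2
    exact le_trans h1 h2
  · -- degenerate case: n < b
    have h1 : cnt ends r s ((Finset.univ : Finset V).image (fun x => ({x} : Finset V)))
        ≤ nV.factorial := cnt_le_factorial ends r s discrete_partition (by omega)
    have h2 : nV.factorial ≤ nV ^ (nV - 1) := factorial_le_pow_sub_one nV
    have h3 : ((nV ^ (nV - 1) : ℕ) : ℝ) = ((nV:ℕ):ℝ) ^ ((nV - 1 : ℕ) : ℝ) := by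
      rw [Real.rpow_natCast]; push_cast; rfl
    have h4 : ((nV:ℕ):ℝ) ^ ((nV - 1 : ℕ) : ℝ) ≤ ((nV:ℕ):ℝ) ^ (2 * (s:ℝ) / c) := by
      apply Real.rpow_le_rpow_of_exponent_le (by exact_mod_cast (by omega : 1 ≤ nV))
      have hcR : (0:ℝ) < (c:ℝ) := by exact_mod_cast hc
      have hnb1 : ((nV - 1 : ℕ) : ℝ) ≤ (b:ℝ) - 1 := by
        have : (nV - 1 : ℕ) ≤ b - 1 := by omega
        have hcast := (Nat.cast_le (α := ℝ)).2 this
        rw [Nat.cast_sub hb1] at hcast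
        exact_mod_cast hcast
      have hblbR : ((b:ℝ) - 1) * c < 2 * (s:ℝ) := by
        have := (Nat.cast_lt (α := ℝ)).2 hblb
        push_cast [Nat.cast_sub hb1] at this
        linarith
      have : (b:ℝ) - 1 < 2 * (s:ℝ) / c := by
        rw [lt_div_iff₀ hcR]
        linarith
      linarith
    calc (↑(cnt ends r s ((Finset.univ : Finset V).image (fun x => ({x} : Finset V)))) : ℝ)
        ≤ (nV.factorial : ℝ) := by exact_mod_cast h1
      _ ≤ ((nV ^ (nV - 1) : ℕ) : ℝ) := by exact_mod_cast h2
      _ = ((nV:ℕ):ℝ) ^ ((nV - 1 : ℕ) : ℝ) := h3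
      _ ≤ ((nV:ℕ):ℝ) ^ (2 * (s:ℝ) / c) := h4


end S7


section S9
lemma tail_sum (a : ℝ) (ha : 0 < a) (J : ℕ) (hJ : 1 ≤ J) (M : ℕ) :
    ∑ j ∈ Finset.Ioc J M, ((j : ℕ) : ℝ) ^ (-(1+a)) ≤ (1/a) * ((J : ℝ)) ^ (-a) := by
  have claim : ∀ m : ℕ, J ≤ m → ∑ j ∈ Finset.Ioc J m, ((j : ℕ) : ℝ) ^ (-(1+a))
      ≤ (1/a) * (((J : ℝ)) ^ (-a) - ((m : ℝ)) ^ (-a)) := by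
    intro m hm
    induction m, hm using Nat.le_induction with
    | base =>
      rw [Finset.Ioc_self, Finset.sum_empty]
      simp
    | succ m hm ih =>
      rw [Finset.sum_Ioc_succ_top (by omega : J ≤ m)]
      have ih2 := ih
      have hpt := tail_ptwise a ha m (by omega)
      have : (((m+1:ℕ)):ℝ) = ((m:ℝ)+1) := by push_cast; ring
      calc (∑ j ∈ Finset.Ioc J m, ((j : ℕ) : ℝ) ^ (-(1+a))) + (((m+1:ℕ)):ℝ) ^ (-(1+a))
          ≤ (1/a) * (((J : ℝ)) ^ (-a) - ((m : ℝ)) ^ (-a)) +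
            (1/a) * ((((m:ℕ)):ℝ) ^ (-a) - (((m+1:ℕ)):ℝ) ^ (-a)) := by
            apply add_le_add ih2 hpt
        _ = (1/a) * (((J : ℝ)) ^ (-a) - (((m+1:ℕ)):ℝ) ^ (-a)) := by ring
  rcases le_or_gt J M with h | h
  · have h1 := claim M h
    have h2 : (0:ℝ) ≤ ((M:ℝ)) ^ (-a) := Real.rpow_nonneg (Nat.cast_nonneg M) _
    have h3 : (0:ℝ) < 1/a := by positivity
    nlinarith
  · rw [Finset.Ioc_eq_empty (by omega), Finset.sum_empty]
    positivity

theorem stmt10_aux (ends : E → Sym2 V) (hnd : ∀ e, ¬ (ends e).IsDiag)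
    (hn : 2 ≤ Fintype.card V) (c : ℕ) (hc : 1 ≤ c)
    (hmin : ∀ A : Finset V, A.Nonempty → Aᶜ.Nonempty → c ≤ cutValue ends A)
    (hex : ∃ A : Finset V, A.Nonempty ∧ Aᶜ.Nonempty ∧ cutValue ends A = c)
    (p δ : ℝ) (hp0 : 0 ≤ p) (hp1 : p ≤ 1) (hδ : 0 < δ)
    (hpc : p ^ c = (Fintype.card V : ℝ) ^ (-(2 + δ)))
    (r : ℕ) (hr2 : 2 ≤ r) :
    failurePr p (Finset.univ.filter (fun F : Finset E =>
        ∃ P : Finset (Finset V), IsPartitionInto P r ∧ rCutEdges ends P ⊆ F))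
      ≤ (Fintype.card V : ℝ) ^ (-(δ * r / 4)) * (1 + 2 / δ) := by
  classical
  set nV := Fintype.card V with hnV
  have hn1 : (1:ℝ) < (nV:ℝ) := by
    have : (2:ℝ) ≤ (nV:ℝ) := by exact_mod_cast hn
    linarith
  have hn1' : (1:ℝ) ≤ (nV:ℝ) := le_of_lt hn1
  have hnpos : (0:ℝ) < (nV:ℝ) := by linarith
  have hcR : (0:ℝ) < (c:ℝ) := by exact_mod_cast hc
  -- power formula
  have hpow : ∀ v : ℕ, (p:ℝ) ^ v = (nV:ℝ) ^ (-(2+δ) * (v:ℝ) / (c:ℝ)) := by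
    intro v
    have h1 : (p:ℝ) ^ (v:ℕ) = ((p:ℝ) ^ (c:ℕ)) ^ ((v:ℝ)/(c:ℝ)) := by
      rw [← Real.rpow_natCast p c, ← Real.rpow_mul hp0, ← Real.rpow_natCast p v]
      congr 1
      field_simp
    rw [h1, hpc, ← Real.rpow_mul (le_of_lt hnpos)]
    congr 1
    ring
  -- step 1 : union bound
  have hG1 := failure_le_sum ends p hp0 hp1 r
  set SP := (Finset.univ : Finset (Finset (Finset V))).filter
    (fun P => IsPartitionInto P r) with hSP
  -- value lower bound
  have hval : ∀ P ∈ SP, r * c ≤ 2 * rCutValue ends P := by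
    intro P hP
    rw [hSP, Finset.mem_filter] at hP
    exact rc_lower hP.2 hr2 ends hmin
  set u : Finset (Finset V) → ℝ :=
    fun P => (nV:ℝ) ^ (2 * ((rCutValue ends P : ℕ):ℝ) / (c:ℝ)) with hu
  set C1 : ℝ := (nV:ℝ) ^ (-((2+δ) * (r:ℝ) / 2)) with hC1
  set g : ℝ → ℝ := fun t => min C1 (t ^ (-(1 + δ/2))) with hg
  -- pointwise bound
  have hpoint : ∀ P ∈ SP, (p:ℝ) ^ (rCutValue ends P) ≤ g (u P) := by
    intro P hP
    set v := rCutValue ends P with hv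
    have claim1 : (p:ℝ) ^ (v:ℕ) = (u P) ^ (-(1 + δ/2)) := by
      rw [hu, ← Real.rpow_mul (le_of_lt hnpos), hpow v]
      congr 1
      field_simp
      ring
    have claim2 : (p:ℝ) ^ (v:ℕ) ≤ C1 := by
      rw [hpow v, hC1]
      apply Real.rpow_le_rpow_of_exponent_le hn1'
      have hvc := hval P hP
      have hvcR : (r:ℝ) * c ≤ 2 * (v:ℝ) := by exact_mod_cast hvc
      rw [div_le_iff₀ hcR]
      nlinarith
    rw [hg]
    exact le_min claim2 (le_of_eq claim1)
  -- antitone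
  have hganti : ∀ x y : ℝ, 1 ≤ x → x ≤ y → g y ≤ g x := by
    intro x y hx hxy
    rw [hg]
    apply min_le_min le_rfl
    have hxpos : (0:ℝ) < x := by linarith
    have hypos : (0:ℝ) < y := by linarith
    rw [Real.rpow_neg (le_of_lt hypos), Real.rpow_neg (le_of_lt hxpos)]
    apply inv_anti₀ (Real.rpow_pos_of_pos hxpos _)
    exact Real.rpow_le_rpow (le_of_lt hxpos) hxy (by linarith)
  -- u ≥ 1
  have hu1 : ∀ P ∈ SP, 1 ≤ u P := by
    intro P _
    rw [hu]
    have h0 : (nV:ℝ) ^ (0:ℝ) ≤ (nV:ℝ) ^ (2 * ((rCutValue ends P : ℕ):ℝ) / (c:ℝ)) := by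
      apply Real.rpow_le_rpow_of_exponent_le hn1'
      positivity
    rwa [Real.rpow_zero] at h0
  -- counting hypothesis
  have hcnt : ∀ P ∈ SP, ((SP.filter (fun Q => u Q ≤ u P)).card : ℝ) ≤ u P := by
    intro P hP
    have hiff : ∀ Q ∈ SP, (u Q ≤ u P ↔ rCutValue ends Q ≤ rCutValue ends P) := by
      intro Q _
      rw [hu, Real.rpow_le_rpow_left_iff hn1]
      rw [div_le_div_iff_of_pos_right hcR]
      constructor
      · intro h
        have : ((rCutValue ends Q : ℕ):ℝ) ≤ ((rCutValue ends P : ℕ):ℝ) := by linarith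
        exact_mod_cast this
      · intro h
        have : ((rCutValue ends Q : ℕ):ℝ) ≤ ((rCutValue ends P : ℕ):ℝ) := by exact_mod_cast h
        linarith
    have heq : SP.filter (fun Q => u Q ≤ u P) =
        SP.filter (fun Q => rCutValue ends Q ≤ rCutValue ends P) :=
      Finset.filter_congr hiff
    rw [heq, hSP, Finset.filter_filter]
    have hcount := count_le ends hc hmin hn r hr2 (rCutValue ends P) (hval P hP)
    exact hcount
  -- sorted sum
  set M := SP.card with hM
  have hsorted := sum_le_sorted g hganti M SP u rfl hu1 hcnt
  -- split the sum
  set q := (r+1)/2 with hq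
  have hq2 : r ≤ 2*q ∧ q ≤ r := by omega
  set J := nV ^ q with hJ
  have hJ1 : 1 ≤ J := Nat.one_le_pow _ _ (by omega)
  have hJcast : ((J:ℕ):ℝ) = (nV:ℝ) ^ ((q:ℕ):ℝ) := by
    rw [Real.rpow_natCast]
    push_cast [hJ]
    ring
  have hC1nn : 0 ≤ C1 := Real.rpow_nonneg (le_of_lt hnpos) _
  have hsplit : ∑ j ∈ Finset.Icc 1 M, g j ≤
      (J:ℝ) * C1 + (1/(δ/2)) * ((J:ℝ)) ^ (-(δ/2)) := by
    have hgC1 : ∀ j : ℕ, g j ≤ C1 := fun j => min_le_left _ _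
    have htail_nn : (0:ℝ) ≤ (1/(δ/2)) * ((J:ℝ)) ^ (-(δ/2)) := by positivity
    rcases le_or_gt M J with hMJ | hMJ
    · have h1 : ∑ j ∈ Finset.Icc 1 M, g j ≤ ∑ j ∈ Finset.Icc 1 M, C1 :=
        Finset.sum_le_sum (fun j _ => hgC1 j)
      rw [Finset.sum_const, Nat.card_Icc] at h1
      have h2 : ((M + 1 - 1) : ℕ) • C1 ≤ (J:ℝ) * C1 := by
        rw [nsmul_eq_mul]
        apply mul_le_mul_of_nonneg_right _ hC1nn
        exact_mod_cast (by omega : M + 1 - 1 ≤ J)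
      linarith
    · have hIcc : Finset.Icc 1 M = Finset.Ioc 0 M := by
        rw [← Finset.Icc_add_one_left_eq_Ioc, zero_add]
      have hcons := Finset.sum_Ioc_consecutive (fun j : ℕ => g j)
        (by omega : (0:ℕ) ≤ J) (le_of_lt hMJ)
      rw [hIcc, ← hcons]
      have hfirst : ∑ j ∈ Finset.Ioc 0 J, g j ≤ (J:ℝ) * C1 := by
        have h1 : ∑ j ∈ Finset.Ioc 0 J, g j ≤ ∑ j ∈ Finset.Ioc 0 J, C1 :=
          Finset.sum_le_sum (fun j _ => hgC1 j)
        rw [Finset.sum_const, Nat.card_Ioc, nsmul_eq_mul] at h1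
        simpa using h1
      have hsecond : ∑ j ∈ Finset.Ioc J M, g j ≤ (1/(δ/2)) * ((J:ℝ)) ^ (-(δ/2)) := by
        have h1 : ∑ j ∈ Finset.Ioc J M, g j ≤
            ∑ j ∈ Finset.Ioc J M, ((j : ℕ) : ℝ) ^ (-(1+δ/2)) := by
          apply Finset.sum_le_sum
          intro j _
          exact min_le_right _ _
        have h2 := tail_sum (δ/2) (by positivity) J hJ1 M
        exact le_trans h1 h2
      exact add_le_add hfirst hsecond
  -- final numeric computation
  have hfinal : (J:ℝ) * C1 + (1/(δ/2)) * ((J:ℝ)) ^ (-(δ/2)) ≤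
      (nV:ℝ) ^ (-(δ * r / 4)) * (1 + 2 / δ) := by
    have hrR : (0:ℝ) ≤ (r:ℝ) := Nat.cast_nonneg r
    have hqr : ((q:ℕ):ℝ) ≤ (r:ℝ) := by exact_mod_cast hq2.2
    have hrq : (r:ℝ) ≤ 2 * ((q:ℕ):ℝ) := by exact_mod_cast hq2.1
    have hterm1 : (J:ℝ) * C1 ≤ (nV:ℝ) ^ (-(δ * r / 4)) := by
      rw [hJcast, hC1, ← Real.rpow_add hnpos]
      apply Real.rpow_le_rpow_of_exponent_le hn1'
      nlinarith [hδ.le]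
    have hterm2 : (1/(δ/2)) * ((J:ℝ)) ^ (-(δ/2)) ≤ (2/δ) * (nV:ℝ) ^ (-(δ * r / 4)) := by
      have he : (1/(δ/2)) = 2/δ := by field_simp
      rw [he]
      apply mul_le_mul_of_nonneg_left _ (by positivity)
      rw [hJcast, ← Real.rpow_mul (le_of_lt hnpos)]
      apply Real.rpow_le_rpow_of_exponent_le hn1'
      nlinarith [hδ.le]
    calc (J:ℝ) * C1 + (1/(δ/2)) * ((J:ℝ)) ^ (-(δ/2))
        ≤ (nV:ℝ) ^ (-(δ * r / 4)) + (2/δ) * (nV:ℝ) ^ (-(δ * r / 4)) := add_le_add hterm1 hterm2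
      _ = (nV:ℝ) ^ (-(δ * r / 4)) * (1 + 2 / δ) := by ring
  -- chain everything
  have hchain1 : ∑ P ∈ SP, (p:ℝ) ^ (rCutValue ends P) ≤ ∑ P ∈ SP, g (u P) :=
    Finset.sum_le_sum hpoint
  calc failurePr p (Finset.univ.filter (fun F : Finset E =>
        ∃ P : Finset (Finset V), IsPartitionInto P r ∧ rCutEdges ends P ⊆ F))
      ≤ ∑ P ∈ SP, (p:ℝ) ^ (rCutValue ends P) := hG1
    _ ≤ ∑ P ∈ SP, g (u P) := hchain1
    _ ≤ ∑ j ∈ Finset.Icc 1 M, g j := hsorted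
    _ ≤ (J:ℝ) * C1 + (1/(δ/2)) * ((J:ℝ)) ^ (-(δ/2)) := hsplit
    _ ≤ (nV:ℝ) ^ (-(δ * r / 4)) * (1 + 2 / δ) := hfinal


end S9

end Stmt10

/-- Let `G` be a multigraph on `n ≥ 2` vertices with minimum cut value `c ≥ 1`
whose edges fail independently with probability `p ∈ [0,1]`, where `p ^ c = n ^ (-(2+δ))` for
some `δ > 0`.  Then for every integer `r ≥ 2` the probability that some `r`-way cut fails
(all edges of its edge set fail) is at most `n ^ (-δ r / 4) * (1 + 2/δ)`. -/
theorem stmt10 {V E : Type} [Fintype V] [DecidableEq V] [Fintype E]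
    (ends : E → Sym2 V) (hnd : ∀ e, ¬ (ends e).IsDiag)
    (hn : 2 ≤ Fintype.card V) (c : ℕ) (hc : 1 ≤ c)
    (hmin : ∀ A : Finset V, A.Nonempty → Aᶜ.Nonempty → c ≤ cutValue ends A)
    (hex : ∃ A : Finset V, A.Nonempty ∧ Aᶜ.Nonempty ∧ cutValue ends A = c)
    (p δ : ℝ) (hp0 : 0 ≤ p) (hp1 : p ≤ 1) (hδ : 0 < δ)
    (hpc : p ^ c = (Fintype.card V : ℝ) ^ (-(2 + δ)))
    (r : ℕ) (hr2 : 2 ≤ r) :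
    failurePr p (Finset.univ.filter (fun F : Finset E =>
        ∃ P : Finset (Finset V), IsPartitionInto P r ∧ rCutEdges ends P ⊆ F))
      ≤ (Fintype.card V : ℝ) ^ (-(δ * r / 4)) * (1 + 2 / δ) := by
  exact Stmt10.stmt10_aux ends hnd hn c hc hmin hex p δ hp0 hp1 hδ hpc r hr2
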